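/- arXiv:1211.0258 — 2 statements merged into one kernel-verified Lean document; each statement's English description precedes it below -/
import Mathlib

section
/- Let \ell > 0 and b \ne 0 be integers satisfying \ell^2 + 4b \ge 0, and define the sequence s by s_0 = 0, s_1 = 1, s_j = \ell s_{j-1} + b s_{j-2} for j \ge 2. Suppose \gcd(\ell, b) = \gcd(\ell^2, b). Then: if b > 0, the s-lecture hall cone C_n^{(s)} is not Gorenstein for any n \ge 5; and if b < -1, C_n^{(s)} is not Gorenstein for any n \ge 6. -/
noncomputable section

open scoped Classical

/-- The set of integer lattice points in `ℝ^n`. -/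
def intLattice (n : ℕ) : Set (Fin n → ℝ) :=
  Set.range (fun (m : Fin n → ℤ) => fun i => (m i : ℝ))

/-- `c` is a Gorenstein point of `C`: an integer point in the interior of `C`
with `C° ∩ ℤ^n = c + (C ∩ ℤ^n)`. -/
def IsGorensteinPoint {n : ℕ} (C : Set (Fin n → ℝ)) (c : Fin n → ℝ) : Prop :=
  c ∈ interior C ∧ c ∈ intLattice n ∧
    interior C ∩ intLattice n = (fun x => c + x) '' (C ∩ intLattice n)

/-- A cone is Gorenstein if it has a Gorenstein point. -/
def IsGorensteinCone {n : ℕ} (C : Set (Fin n → ℝ)) : Prop :=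
  ∃ c, IsGorensteinPoint C c

/-- The `s`-lecture hall cone `{λ : 0 ≤ λ₁/s₁ ≤ λ₂/s₂ ≤ ⋯ ≤ λₙ/sₙ}`,
where coordinate `i : Fin n` corresponds to the mathematical index `i+1`. -/
def lhCone (n : ℕ) (s : ℕ → ℤ) : Set (Fin n → ℝ) :=
  {x | (∀ i : Fin n, (i : ℕ) = 0 → 0 ≤ x i / (s 1 : ℝ)) ∧
       (∀ i j : Fin n, (j : ℕ) = (i : ℕ) + 1 →
          x i / (s ((i : ℕ) + 1) : ℝ) ≤ x j / (s ((j : ℕ) + 1) : ℝ))}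

/-- The `s`-lecture hall partitions of length `n`: integer points of the cone. -/
def lhPartitions (n : ℕ) (s : ℕ → ℤ) : Set (Fin n → ℤ) :=
  {lam | (fun i => (lam i : ℝ)) ∈ lhCone n s}

/-- The generating function `f_n^{(s)}(q) = ∑_{λ ∈ L_n^{(s)}} q^{|λ|}` as a power series. -/
def lhGenFun (n : ℕ) (s : ℕ → ℤ) : PowerSeries ℚ :=
  PowerSeries.mk fun m =>
    (Set.ncard {lam : Fin n → ℤ | lam ∈ lhPartitions n s ∧ ∑ i, lam i = (m : ℤ)} : ℚ)

/-- A rational function `r(q)` is self-reciprocal if `r(1/q) = ± q^k r(q)`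
for some nonnegative integer `k`. -/
def SelfReciprocalRat (r : RatFunc ℚ) : Prop :=
  ∃ k : ℕ, RatFunc.eval (algebraMap ℚ (RatFunc ℚ)) (RatFunc.X)⁻¹ r = RatFunc.X ^ k * r ∨
           RatFunc.eval (algebraMap ℚ (RatFunc ℚ)) (RatFunc.X)⁻¹ r = -(RatFunc.X ^ k * r)

/-- A power series is self-reciprocal as a rational function: it is the power series
expansion of a rational function `H/D` (with `D(0) ≠ 0`) which is self-reciprocal. -/
def GenFunSelfReciprocal (f : PowerSeries ℚ) : Prop :=
  ∃ H D : Polynomial ℚ, D.coeff 0 ≠ 0 ∧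
    (↑H : PowerSeries ℚ) = f * (↑D : PowerSeries ℚ) ∧
    SelfReciprocalRat (algebraMap (Polynomial ℚ) (RatFunc ℚ) H /
      algebraMap (Polynomial ℚ) (RatFunc ℚ) D)



section NT
variable (ℓ b : ℤ)

/-- positivity of the sequence -/
lemma s_pos (hℓ : 0 < ℓ) (hD : 0 ≤ ℓ ^ 2 + 4 * b)
    (s : ℕ → ℤ) (hs0 : s 0 = 0) (hs1 : s 1 = 1)
    (hrec : ∀ j, 2 ≤ j → s j = ℓ * s (j - 1) + b * s (j - 2)) :
    ∀ j, 1 ≤ j → 0 < s j := by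
  have key : ∀ j, 0 < s (j+1) ∧ ℓ * s (j+1) ≤ 2 * s (j+2) := by
    intro j
    induction j with
    | zero =>
      have h2 : s 2 = ℓ * s 1 + b * s 0 := hrec 2 (by norm_num)
      constructor
      · simp [hs1]
      · simp only [h2, hs0, hs1] at *; nlinarith
    | succ k ih =>
      obtain ⟨hp, hle⟩ := ih
      have h3 : s (k+3) = ℓ * s (k+2) + b * s (k+1) := by
        have := hrec (k+3) (by omega)
        simpa using this
      have hp2 : 0 < s (k+2) := by nlinarith
      refine ⟨hp2, ?_⟩
      have h1 : 0 ≤ (ℓ^2 + 4*b) * s (k+1) := mul_nonneg hD hp.le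
      nlinarith
  intro j hj
  obtain ⟨k, rfl⟩ : ∃ k, j = k + 1 := ⟨j - 1, by omega⟩
  exact (key k).1

end NT


section NT2
variable (ℓ b : ℤ)

lemma s_formulas (s : ℕ → ℤ) (hs0 : s 0 = 0) (hs1 : s 1 = 1)
    (hrec : ∀ j, 2 ≤ j → s j = ℓ * s (j - 1) + b * s (j - 2)) :
    s 2 = ℓ ∧ s 3 = ℓ^2 + b ∧ s 4 = ℓ^3 + 2*b*ℓ ∧ s 5 = ℓ^4 + 3*b*ℓ^2 + b^2 ∧
      s 6 = ℓ^5 + 4*b*ℓ^3 + 3*b^2*ℓ := by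
  have h2 := hrec 2 (by norm_num)
  have h3 := hrec 3 (by norm_num)
  have h4 := hrec 4 (by norm_num)
  have h5 := hrec 5 (by norm_num)
  have h6 := hrec 6 (by norm_num)
  norm_num at h2 h3 h4 h5 h6
  rw [hs0, hs1] at h2
  rw [h2, hs1] at h3
  rw [h3, h2] at h4
  rw [h4, h3] at h5
  rw [h5, h4] at h6
  exact ⟨by linarith, by linear_combination h3, by linear_combination h4,
    by linear_combination h5, by linear_combination h6⟩

end NT2



variable (ℓ b : ℤ)

/-- structural decomposition from the gcd hypothesis -/
lemma gcd_struct (hℓ : 0 < ℓ) (hb : b ≠ 0)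
    (hgcd : Int.gcd ℓ b = Int.gcd (ℓ ^ 2) b) :
    ∃ D ℓ₁ b₁ : ℤ, 0 < D ∧ ℓ = D * ℓ₁ ∧ b = D * b₁ ∧ IsCoprime b₁ ℓ ∧
      D = (Int.gcd ℓ b : ℤ) := by
  have hD0 : 0 < (Int.gcd ℓ b : ℤ) := by
    have : 0 < Int.gcd ℓ b := Int.gcd_pos_of_ne_zero_left b hℓ.ne'
    exact_mod_cast this
  obtain ⟨ℓ₁, hl⟩ : (Int.gcd ℓ b : ℤ) ∣ ℓ := Int.gcd_dvd_left _ _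
  obtain ⟨b₁, hbb⟩ : (Int.gcd ℓ b : ℤ) ∣ b := Int.gcd_dvd_right _ _
  refine ⟨_, ℓ₁, b₁, hD0, hl, hbb, ?_, rfl⟩
  rw [Int.isCoprime_iff_gcd_eq_one]
  have h1 : (Int.gcd ℓ b : ℤ) * (Int.gcd b₁ ℓ : ℤ) ∣ ℓ ^ 2 := by
    have h2 : (Int.gcd b₁ ℓ : ℤ) ∣ ℓ := Int.gcd_dvd_right _ _
    have h3 : (Int.gcd ℓ b : ℤ) ∣ ℓ := ⟨ℓ₁, hl⟩
    have := mul_dvd_mul h3 h2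
    simpa [sq] using this
  have h2 : (Int.gcd ℓ b : ℤ) * (Int.gcd b₁ ℓ : ℤ) ∣ b := by
    have h := mul_dvd_mul_left (Int.gcd ℓ b : ℤ) (Int.gcd_dvd_left (a := b₁) (b := ℓ))
    rwa [← hbb] at h
  have h3 : (Int.gcd ℓ b : ℤ) * (Int.gcd b₁ ℓ : ℤ) ∣ (Int.gcd ℓ b : ℤ) := by
    have h3' : ((Int.gcd (ℓ^2) b : ℤ)) * (Int.gcd b₁ ℓ : ℤ) ∣ (Int.gcd (ℓ^2) b : ℤ) :=
      Int.dvd_coe_gcd (by rw [← hgcd]; exact h1) (by rw [← hgcd]; exact h2)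
    rwa [← hgcd] at h3'
  have h4 : (Int.gcd b₁ ℓ : ℤ) ∣ 1 := by
    rcases h3 with ⟨k, hk⟩
    refine ⟨k, mul_left_cancel₀ hD0.ne' ?_⟩
    rw [← mul_assoc, ← hk, mul_one]
  have h5 : (Int.gcd b₁ ℓ : ℤ) = 1 := Int.eq_one_of_dvd_one (Int.natCast_nonneg _) h4
  exact_mod_cast h5




private lemma key_dvd (D X g : ℤ) (hD0 : 0 < D) (h1 : g ∣ D ^ 2 * X)
    (hX : IsCoprime D X) (k : ℕ) (hk : 2 ≤ k) (h2 : g ∣ D ^ k) : g ∣ D ^ 2 := by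
  have h3 : g ∣ (Int.gcd (D^2 * D^(k-2)) (D^2 * X) : ℤ) := by
    refine Int.dvd_coe_gcd ?_ h1
    have : D ^ k = D^2 * D^(k-2) := by
      rw [← pow_add]; congr 1; omega
    rwa [this] at h2
  rw [Int.gcd_mul_left] at h3
  have h4 : Int.gcd (D^(k-2)) X = 1 := Int.isCoprime_iff_gcd_eq_one.mp (hX.pow_left)
  rw [h4] at h3
  have h5 : ((D^2).natAbs : ℤ) = D^2 := Int.natAbs_of_nonneg (by positivity)
  simpa [h5] using h3

/-- `gcd(s₃, s₄) = d` -/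
private lemma g2_eq (ℓ b D ℓ₁ b₁ : ℤ) (hD0 : 0 < D) (hl : ℓ = D * ℓ₁)
    (hbb : b = D * b₁) (hcop : IsCoprime b₁ ℓ) :
    (Int.gcd (ℓ^2 + b) (ℓ^3 + 2*b*ℓ) : ℤ) = D := by
  have hS3 : ℓ^2 + b = D * (D*ℓ₁^2 + b₁) := by rw [hl, hbb]; ring
  have hS4 : ℓ^3 + 2*b*ℓ = D * (D^2*ℓ₁^3 + 2*b₁*D*ℓ₁) := by rw [hl, hbb]; ring
  have copDb1 : IsCoprime D b₁ := (hcop.of_isCoprime_of_dvd_right ⟨ℓ₁, hl⟩).symm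
  have d1 : (Int.gcd (ℓ^2 + b) (ℓ^3 + 2*b*ℓ) : ℤ) ∣ ℓ^2 + b := Int.gcd_dvd_left _ _
  have d2 : (Int.gcd (ℓ^2 + b) (ℓ^3 + 2*b*ℓ) : ℤ) ∣ ℓ^3 + 2*b*ℓ := Int.gcd_dvd_right _ _
  have cop_b1_S3 : IsCoprime b₁ (ℓ^2 + b) := by
    have h := (hcop.mul_right hcop).add_mul_left_right D
    have he : ℓ * ℓ + b₁ * D = ℓ^2 + b := by rw [hbb]; ring
    rwa [he] at h
  have copg : IsCoprime (Int.gcd (ℓ^2 + b) (ℓ^3 + 2*b*ℓ) : ℤ) b₁ :=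
    (cop_b1_S3.of_isCoprime_of_dvd_right d1).symm
  have db2 : (Int.gcd (ℓ^2 + b) (ℓ^3 + 2*b*ℓ) : ℤ) ∣ (D * D) * (b₁ * b₁) := by
    have h : (D * D) * (b₁ * b₁) = (ℓ^2+b)*(ℓ^2+b) - ℓ*(ℓ^3+2*b*ℓ) := by
      rw [hbb]; ring
    rw [h]; exact dvd_sub (d1.mul_left _) (d2.mul_left _)
  have gDD : (Int.gcd (ℓ^2 + b) (ℓ^3 + 2*b*ℓ) : ℤ) ∣ D * D :=
    (copg.mul_right copg).dvd_of_dvd_mul_right db2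
  have gDY : (Int.gcd (ℓ^2 + b) (ℓ^3 + 2*b*ℓ) : ℤ) ∣ D * (D*ℓ₁^2 + b₁) := hS3 ▸ d1
  have copDY : IsCoprime D (D*ℓ₁^2 + b₁) := by
    have h := copDb1.add_mul_left_right (ℓ₁^2)
    have he : b₁ + D * ℓ₁^2 = D*ℓ₁^2 + b₁ := by ring
    rwa [he] at h
  have hfin : (Int.gcd (ℓ^2 + b) (ℓ^3 + 2*b*ℓ) : ℤ) ∣ (Int.gcd (D*D) (D*(D*ℓ₁^2+b₁)) : ℤ) :=
    Int.dvd_coe_gcd gDD gDY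
  rw [Int.gcd_mul_left, Int.isCoprime_iff_gcd_eq_one.mp copDY, mul_one] at hfin
  rw [Int.natAbs_of_nonneg hD0.le] at hfin
  refine Int.dvd_antisymm (Int.natCast_nonneg _) hD0.le hfin ?_
  exact Int.dvd_coe_gcd ⟨_, hS3⟩ ⟨_, hS4⟩

/-- `gcd(s₄, s₅) ∣ d²` -/
private lemma g3_dvd (ℓ b D ℓ₁ b₁ : ℤ) (hD0 : 0 < D) (hl : ℓ = D * ℓ₁)
    (hbb : b = D * b₁) (hcop : IsCoprime b₁ ℓ) :
    (Int.gcd (ℓ^3 + 2*b*ℓ) (ℓ^4 + 3*b*ℓ^2 + b^2) : ℤ) ∣ D^2 := by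
  set g : ℤ := (Int.gcd (ℓ^3 + 2*b*ℓ) (ℓ^4 + 3*b*ℓ^2 + b^2) : ℤ) with hg
  have copDb1 : IsCoprime D b₁ := (hcop.of_isCoprime_of_dvd_right ⟨ℓ₁, hl⟩).symm
  have d1 : g ∣ ℓ^3 + 2*b*ℓ := Int.gcd_dvd_left _ _
  have d2 : g ∣ ℓ^4 + 3*b*ℓ^2 + b^2 := Int.gcd_dvd_right _ _
  have cop_b1_S4 : IsCoprime b₁ (ℓ^3 + 2*b*ℓ) := by
    have h2 : IsCoprime b₁ (ℓ^2 + 2*b) := by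
      have h := (hcop.mul_right hcop).add_mul_left_right (2*D)
      have he : ℓ * ℓ + b₁ * (2*D) = ℓ^2 + 2*b := by rw [hbb]; ring
      rwa [he] at h
    have h := hcop.mul_right h2
    have he : ℓ * (ℓ^2 + 2*b) = ℓ^3 + 2*b*ℓ := by ring
    rwa [he] at h
  have copg : IsCoprime g b₁ := (cop_b1_S4.of_isCoprime_of_dvd_right d1).symm
  have db3 : g ∣ D^3 * b₁^3 := by
    have h : D^3 * b₁^3 = (ℓ^2+b)*(ℓ^4+3*b*ℓ^2+b^2) - (ℓ^3+2*b*ℓ)*(ℓ^3+2*b*ℓ) := by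
      rw [hbb]; ring
    rw [h]; exact dvd_sub (d2.mul_left _) (d1.mul_left _)
  have gD3 : g ∣ D^3 := (copg.pow_right).dvd_of_dvd_mul_right db3
  have hS5 : ℓ^4 + 3*b*ℓ^2 + b^2 = D^2 * (D^2*ℓ₁^4 + 3*D*b₁*ℓ₁^2 + b₁^2) := by
    rw [hl, hbb]; ring
  have copDX : IsCoprime D (D^2*ℓ₁^4 + 3*D*b₁*ℓ₁^2 + b₁^2) := by
    have h := (copDb1.mul_right copDb1).add_mul_left_right (D*ℓ₁^4 + 3*b₁*ℓ₁^2)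
    have he : b₁ * b₁ + D * (D*ℓ₁^4 + 3*b₁*ℓ₁^2) = D^2*ℓ₁^4 + 3*D*b₁*ℓ₁^2 + b₁^2 := by ring
    rwa [he] at h
  exact key_dvd D _ g hD0 (hS5 ▸ d2) copDX 3 (by norm_num) gD3

/-- `gcd(s₅, s₆) ∣ d²` -/
private lemma g4_dvd (ℓ b D ℓ₁ b₁ : ℤ) (hD0 : 0 < D) (hl : ℓ = D * ℓ₁)
    (hbb : b = D * b₁) (hcop : IsCoprime b₁ ℓ) :
    (Int.gcd (ℓ^4 + 3*b*ℓ^2 + b^2) (ℓ^5 + 4*b*ℓ^3 + 3*b^2*ℓ) : ℤ) ∣ D^2 := by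
  set g : ℤ := (Int.gcd (ℓ^4 + 3*b*ℓ^2 + b^2) (ℓ^5 + 4*b*ℓ^3 + 3*b^2*ℓ) : ℤ) with hg
  have copDb1 : IsCoprime D b₁ := (hcop.of_isCoprime_of_dvd_right ⟨ℓ₁, hl⟩).symm
  have d1 : g ∣ ℓ^4 + 3*b*ℓ^2 + b^2 := Int.gcd_dvd_left _ _
  have d2 : g ∣ ℓ^5 + 4*b*ℓ^3 + 3*b^2*ℓ := Int.gcd_dvd_right _ _
  have cop_b1_S5 : IsCoprime b₁ (ℓ^4 + 3*b*ℓ^2 + b^2) := by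
    have h := (hcop.pow_right (n := 4)).add_mul_left_right (D*(3*ℓ^2+b))
    have he : ℓ^4 + b₁ * (D*(3*ℓ^2+b)) = ℓ^4 + 3*b*ℓ^2 + b^2 := by
      rw [hbb]; ring
    rwa [he] at h
  have copg : IsCoprime g b₁ := (cop_b1_S5.of_isCoprime_of_dvd_right d1).symm
  have db4 : g ∣ D^4 * b₁^4 := by
    have h : D^4 * b₁^4 = (ℓ^4+3*b*ℓ^2+b^2)*(ℓ^4+3*b*ℓ^2+b^2)
        - (ℓ^3+2*b*ℓ)*(ℓ^5+4*b*ℓ^3+3*b^2*ℓ) := by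
      rw [hbb]; ring
    rw [h]; exact dvd_sub (d1.mul_left _) (d2.mul_left _)
  have gD4 : g ∣ D^4 := (copg.pow_right).dvd_of_dvd_mul_right db4
  have hS5 : ℓ^4 + 3*b*ℓ^2 + b^2 = D^2 * (D^2*ℓ₁^4 + 3*D*b₁*ℓ₁^2 + b₁^2) := by
    rw [hl, hbb]; ring
  have copDX : IsCoprime D (D^2*ℓ₁^4 + 3*D*b₁*ℓ₁^2 + b₁^2) := by
    have h := (copDb1.mul_right copDb1).add_mul_left_right (D*ℓ₁^4 + 3*b₁*ℓ₁^2)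
    have he : b₁ * b₁ + D * (D*ℓ₁^4 + 3*b₁*ℓ₁^2) = D^2*ℓ₁^4 + 3*D*b₁*ℓ₁^2 + b₁^2 := by ring
    rwa [he] at h
  exact key_dvd D _ g hD0 (hS5 ▸ d1) copDX 4 (by norm_num) gD4



section NTMAIN


private lemma bpos_final (ℓ b D G3 K1 : ℤ) (hℓ : 0 < ℓ) (hb : 0 < b) (hD0 : 0 < D)
    (hS4pos : 0 < ℓ^3+2*b*ℓ) (hG3pos : 0 < G3) (hG3le : G3 ≤ D^2) (hDle : D ≤ ℓ)
    (hK : (ℓ^3+2*b*ℓ) * K1 = G3 + b*D) : False := by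
  have hKpos : 1 ≤ K1 := by
    rcases lt_or_ge K1 1 with h | h
    · exfalso
      have h0 : K1 ≤ 0 := by omega
      have h1 : (ℓ^3+2*b*ℓ) * K1 ≤ 0 := mul_nonpos_of_nonneg_of_nonpos hS4pos.le h0
      nlinarith [mul_pos hb hD0]
    · exact h
  have hle : ℓ^3+2*b*ℓ ≤ G3 + b*D := by
    calc ℓ^3+2*b*ℓ = (ℓ^3+2*b*ℓ) * 1 := by ring
    _ ≤ (ℓ^3+2*b*ℓ) * K1 := mul_le_mul_of_nonneg_left hKpos hS4pos.le
    _ = G3 + b*D := hK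
  have hD2 : D^2 ≤ ℓ^2 := by nlinarith
  have hbD : b*D ≤ b*ℓ := mul_le_mul_of_nonneg_left hDle hb.le
  nlinarith [mul_pos hb hℓ, mul_le_mul_of_nonneg_left (mul_le_mul_of_nonneg_left hℓ hℓ.le) hℓ.le]

private lemma bneg_case1 (ℓ b D G3 G4 K1 : ℤ) (hb : b < -1) (hDisc : 0 ≤ ℓ^2 + 4*b)
    (hD0 : 0 < D) (h42 : 0 < ℓ^2+2*b) (hS4pos : 0 < ℓ^3+2*b*ℓ)
    (hG3pos : 0 < G3) (hG4le : G4 ≤ D^2)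
    (hDle : D ≤ ℓ) (hDleb : D ≤ -b) (hDdvdG3 : D ∣ G3)
    (hK34 : (ℓ^3+2*b*ℓ) * K1 = G3 + b*D)
    (hK45 : 0 = G4 + b * G3) : False := by
  have hbG3 : (-b) * G3 = G4 := by linear_combination hK45
  have hDG3 : D ≤ G3 := Int.le_of_dvd hG3pos hDdvdG3
  have h1 : (-b) * D ≤ (-b) * G3 := mul_le_mul_of_nonneg_left hDG3 (by omega)
  have h2 : (-b) * D ≤ D ^ 2 := by
    calc (-b) * D ≤ (-b) * G3 := h1
    _ = G4 := hbG3
    _ ≤ D^2 := hG4le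
  have h3 : -b ≤ D := le_of_mul_le_mul_right (h2.trans_eq (pow_two D)) hD0
  have hDb : D = -b := le_antisymm hDleb h3
  have h4 : (-b) * G3 ≤ (-b) * (-b) := by
    calc (-b) * G3 = G4 := hbG3
    _ ≤ D^2 := hG4le
    _ = (-b) * (-b) := by rw [hDb]; ring
  have h5 : G3 ≤ -b := le_of_mul_le_mul_left h4 (by omega)
  have hG3D : G3 = D := le_antisymm (hDb ▸ h5) hDG3
  rw [hG3D, hDb] at hK34
  have hneg : (-b) + b * (-b) < 0 := by nlinarith [sq_nonneg (b+1)]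
  have hK1neg : K1 ≤ -1 := by
    rcases lt_or_ge K1 0 with h | h
    · omega
    · exfalso
      have h0 : 0 ≤ (ℓ^3+2*b*ℓ) * K1 := mul_nonneg hS4pos.le h
      linarith
  have h6 : (ℓ^3+2*b*ℓ) * K1 ≤ (ℓ^3+2*b*ℓ) * (-1) :=
    mul_le_mul_of_nonneg_left hK1neg hS4pos.le
  have h7 : ℓ^3+2*b*ℓ ≤ b^2 + b := by linarith [h6, hK34]
  have h8 : -b ≤ ℓ := by linarith [hDle, hDb.le, hDb.ge]
  have h9 : 0 ≤ (ℓ - (-b)) * (ℓ^2 + 2*b) := mul_nonneg (by linarith) h42.le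
  have h10 : (-b) * (-2*b) ≤ (-b) * (ℓ^2+2*b) :=
    mul_le_mul_of_nonneg_left (by linarith) (by linarith)
  nlinarith [h7, h9, h10, sq_nonneg b]

private lemma bneg_case2 (ℓ b D G3 G4 K2 : ℤ) (hb : b < -1)
    (hl4 : 0 ≤ ℓ^4 + 4*b*ℓ^2) (hS5pos : 0 < ℓ^4+3*b*ℓ^2+b^2)
    (hG3pos : 0 < G3) (hG4pos : 0 < G4) (hG3le : G3 ≤ D^2) (hG4le : G4 ≤ D^2)
    (hD2 : D^2 ≤ ℓ^2)
    (hK45 : (ℓ^4+3*b*ℓ^2+b^2) * K2 = G4 + b*G3) (hK2 : K2 ≠ 0) : False := by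
  have hbG3b : b * G3 ≤ b * 1 := mul_le_mul_of_nonpos_left hG3pos (by omega)
  have hbD2G3 : b * D^2 ≤ b * G3 := mul_le_mul_of_nonpos_left hG3le (by omega)
  have hbl2D2 : b * ℓ^2 ≤ b * D^2 := mul_le_mul_of_nonpos_left hD2 (by omega)
  have hbG3b' : b * G3 ≤ b := by simpa using hbG3b
  have hS5l2 : ℓ^2 + b^2 ≤ ℓ^4+3*b*ℓ^2+b^2 := by
    nlinarith [mul_nonneg (show (0:ℤ) ≤ -b-2 by omega) (sq_nonneg ℓ), hl4]
  have hup : G4 + b*G3 < ℓ^4+3*b*ℓ^2+b^2 := by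
    linarith [hG4le, hD2, hbG3b', hS5l2, sq_nonneg b]
  have hlo : -(ℓ^4+3*b*ℓ^2+b^2) < G4 + b*G3 := by
    linarith [hG4pos, hbD2G3, hbl2D2, hl4, sq_nonneg b]
  rcases lt_or_gt_of_ne hK2 with h | h
  · have h1 : K2 ≤ -1 := by omega
    have h2 : (ℓ^4+3*b*ℓ^2+b^2) * K2 ≤ (ℓ^4+3*b*ℓ^2+b^2) * (-1) :=
      mul_le_mul_of_nonneg_left h1 hS5pos.le
    linarith [hK45]
  · have h1 : 1 ≤ K2 := by omega
    have h2 : (ℓ^4+3*b*ℓ^2+b^2) * 1 ≤ (ℓ^4+3*b*ℓ^2+b^2) * K2 :=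
      mul_le_mul_of_nonneg_left h1 hS5pos.le
    linarith [hK45]

lemma nt_bpos (ℓ b : ℤ) (hℓ : 0 < ℓ) (hb : 0 < b)
    (hgcd : Int.gcd ℓ b = Int.gcd (ℓ ^ 2) b) (S3 S4 S5 : ℤ)
    (h3f : S3 = ℓ^2+b) (h4f : S4 = ℓ^3+2*b*ℓ) (h5f : S5 = ℓ^4+3*b*ℓ^2+b^2)
    (M2 M3 M4 : ℤ)
    (e2 : S3 * M3 - S4 * M2 = (Int.gcd S3 S4 : ℤ))
    (e3 : S4 * M4 - S5 * M3 = (Int.gcd S4 S5 : ℤ)) : False := by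
  subst h3f h4f h5f
  obtain ⟨D, ℓ₁, b₁, hD0, hl, hbb, hcop, hDdef⟩ := gcd_struct ℓ b hℓ hb.ne' hgcd
  rw [g2_eq ℓ b D ℓ₁ b₁ hD0 hl hbb hcop] at e2
  set G3 : ℤ := (Int.gcd (ℓ^3+2*b*ℓ) (ℓ^4+3*b*ℓ^2+b^2) : ℤ) with hG3
  have hS4pos : 0 < ℓ^3+2*b*ℓ := by positivity
  have hG3pos : 0 < G3 := by
    rw [hG3]
    exact Int.natCast_pos.mpr (Int.gcd_pos_of_ne_zero_left _ hS4pos.ne')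
  have hG3le : G3 ≤ D^2 := Int.le_of_dvd (by positivity)
    (g3_dvd ℓ b D ℓ₁ b₁ hD0 hl hbb hcop)
  have hDle : D ≤ ℓ := Int.le_of_dvd hℓ ⟨ℓ₁, hl⟩
  have hK : (ℓ^3+2*b*ℓ) * (M4 - ℓ*M3 - b*M2) = G3 + b*D := by
    linear_combination e3 + b * e2
  exact bpos_final ℓ b D G3 _ hℓ hb hD0 hS4pos hG3pos hG3le hDle hK

lemma nt_bneg (ℓ b : ℤ) (hℓ : 0 < ℓ) (hb : b < -1) (hDisc : 0 ≤ ℓ^2 + 4*b)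
    (hgcd : Int.gcd ℓ b = Int.gcd (ℓ ^ 2) b) (S3 S4 S5 S6 : ℤ)
    (h3f : S3 = ℓ^2+b) (h4f : S4 = ℓ^3+2*b*ℓ) (h5f : S5 = ℓ^4+3*b*ℓ^2+b^2)
    (h6f : S6 = ℓ^5+4*b*ℓ^3+3*b^2*ℓ) (M2 M3 M4 M5 : ℤ)
    (e2 : S3 * M3 - S4 * M2 = (Int.gcd S3 S4 : ℤ))
    (e3 : S4 * M4 - S5 * M3 = (Int.gcd S4 S5 : ℤ))
    (e4 : S5 * M5 - S6 * M4 = (Int.gcd S5 S6 : ℤ)) : False := by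
  subst h3f h4f h5f h6f
  obtain ⟨D, ℓ₁, b₁, hD0, hl, hbb, hcop, hDdef⟩ := gcd_struct ℓ b hℓ (by omega) hgcd
  rw [g2_eq ℓ b D ℓ₁ b₁ hD0 hl hbb hcop] at e2
  set G3 : ℤ := (Int.gcd (ℓ^3+2*b*ℓ) (ℓ^4+3*b*ℓ^2+b^2) : ℤ) with hG3
  set G4 : ℤ := (Int.gcd (ℓ^4+3*b*ℓ^2+b^2) (ℓ^5+4*b*ℓ^3+3*b^2*ℓ) : ℤ) with hG4
  have h42 : 0 < ℓ^2+2*b := by linarith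
  have hS4pos : 0 < ℓ^3+2*b*ℓ := by nlinarith [mul_pos hℓ h42]
  have hl2D : 0 ≤ ℓ^2*(ℓ^2+4*b) := mul_nonneg (sq_nonneg ℓ) hDisc
  have hl4 : 0 ≤ ℓ^4 + 4*b*ℓ^2 := by nlinarith [hl2D]
  have hS5pos : 0 < ℓ^4+3*b*ℓ^2+b^2 := by nlinarith [sq_nonneg ℓ, sq_nonneg b]
  have hG3pos : 0 < G3 := by
    rw [hG3]
    exact Int.natCast_pos.mpr (Int.gcd_pos_of_ne_zero_left _ hS4pos.ne')
  have hG4pos : 0 < G4 := by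
    rw [hG4]
    exact Int.natCast_pos.mpr (Int.gcd_pos_of_ne_zero_left _ hS5pos.ne')
  have hG3le : G3 ≤ D^2 := Int.le_of_dvd (by positivity)
    (g3_dvd ℓ b D ℓ₁ b₁ hD0 hl hbb hcop)
  have hG4le : G4 ≤ D^2 := Int.le_of_dvd (by positivity)
    (g4_dvd ℓ b D ℓ₁ b₁ hD0 hl hbb hcop)
  have hDle : D ≤ ℓ := Int.le_of_dvd hℓ ⟨ℓ₁, hl⟩
  have hD2 : D^2 ≤ ℓ^2 := by nlinarith
  have hDleb : D ≤ -b := Int.le_of_dvd (by omega) ⟨-b₁, by rw [hbb]; ring⟩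
  have hDdvdG3 : D ∣ G3 := by
    rw [hG3]
    refine Int.dvd_coe_gcd ⟨D*ℓ₁^3*D + 2*b₁*ℓ₁*D, by rw [hl, hbb]; ring⟩
      ⟨D^3*ℓ₁^4 + 3*D*b₁*ℓ₁^2*D + D*b₁^2, by rw [hl, hbb]; ring⟩
  have hK34 : (ℓ^3+2*b*ℓ) * (M4 - ℓ*M3 - b*M2) = G3 + b*D := by
    linear_combination e3 + b * e2
  have hK45 : (ℓ^4+3*b*ℓ^2+b^2) * (M5 - ℓ*M4 - b*M3) = G4 + b*G3 := by
    linear_combination e4 + b * e3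
  by_cases hK2 : M5 - ℓ*M4 - b*M3 = 0
  · rw [hK2, mul_zero] at hK45
    exact bneg_case1 ℓ b D G3 G4 _ hb hDisc hD0 h42 hS4pos hG3pos hG4le hDle hDleb
      hDdvdG3 hK34 hK45
  · exact bneg_case2 ℓ b D G3 G4 _ hb hl4 hS5pos hG3pos hG4pos hG3le hG4le hD2
      hK45 hK2

end NTMAIN

/-- the open strict cone -/
def Sopen (n : ℕ) (s : ℕ → ℤ) : Set (Fin n → ℝ) :=
  {x | ∀ p : Fin n, 0 < x p / (s ((p:ℕ)+1) : ℝ)} ∩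
  {x | ∀ p q : Fin n, (q:ℕ) = (p:ℕ)+1 →
      x p / (s ((p:ℕ)+1) : ℝ) < x q / (s ((q:ℕ)+1) : ℝ)}

lemma Sopen_isOpen (n : ℕ) (s : ℕ → ℤ) : IsOpen (Sopen n s) := by
  refine IsOpen.inter ?_ ?_
  · rw [Set.setOf_forall]
    exact isOpen_iInter_of_finite fun p =>
      isOpen_lt continuous_const ((continuous_apply p).div_const _)
  · rw [Set.setOf_forall]
    refine isOpen_iInter_of_finite fun p => ?_
    rw [Set.setOf_forall]
    refine isOpen_iInter_of_finite fun q => ?_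
    rcases eq_or_ne ((q:ℕ)) ((p:ℕ)+1) with hpq | hpq
    · have he : {x : Fin n → ℝ | (q:ℕ) = (p:ℕ)+1 →
          x p / (s ((p:ℕ)+1) : ℝ) < x q / (s ((q:ℕ)+1) : ℝ)}
          = {x : Fin n → ℝ | x p / (s ((p:ℕ)+1) : ℝ) < x q / (s ((q:ℕ)+1) : ℝ)} := by
        ext x; simp [hpq]
      rw [he]
      exact isOpen_lt ((continuous_apply p).div_const _) ((continuous_apply q).div_const _)
    · have he : {x : Fin n → ℝ | (q:ℕ) = (p:ℕ)+1 →
          x p / (s ((p:ℕ)+1) : ℝ) < x q / (s ((q:ℕ)+1) : ℝ)} = Set.univ := by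
        ext x; simp [hpq]
      rw [he]
      exact isOpen_univ

lemma Sopen_sub (n : ℕ) (s : ℕ → ℤ) : Sopen n s ⊆ lhCone n s := by
  rintro x ⟨h1, h2⟩
  constructor
  · intro i hi
    have := h1 i
    rw [hi] at this
    exact (le_of_lt this)
  · intro i j hj
    exact (h2 i j hj).le

lemma Sopen_sub_interior (n : ℕ) (s : ℕ → ℤ) :
    Sopen n s ⊆ interior (lhCone n s) :=
  interior_maximal (Sopen_sub n s) (Sopen_isOpen n s)

lemma interior_strict (n : ℕ) (s : ℕ → ℤ) (hpos : ∀ j, 1 ≤ j → 0 < s j)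
    (c : Fin n → ℝ) (hc : c ∈ interior (lhCone n s)) (p q : Fin n)
    (hq : (q:ℕ) = (p:ℕ)+1) :
    c p / (s ((p:ℕ)+1) : ℝ) < c q / (s ((q:ℕ)+1) : ℝ) := by
  have hne : q ≠ p := by
    intro h; rw [h] at hq; omega
  set v : Fin n → ℝ := Pi.single q 1 with hv
  have hcont : Continuous (fun t : ℝ => c + t • v) :=
    continuous_const.add (continuous_id.smul continuous_const)
  have hF : IsOpen ((fun t : ℝ => c + t • v) ⁻¹' interior (lhCone n s)) :=
    hcont.isOpen_preimage _ isOpen_interior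
  have h0 : (0:ℝ) ∈ (fun t : ℝ => c + t • v) ⁻¹' interior (lhCone n s) := by
    simpa using hc
  obtain ⟨ε, hε, hball⟩ := Metric.isOpen_iff.mp hF 0 h0
  have ht : -(ε/2) ∈ Metric.ball (0:ℝ) ε := by
    simp only [Metric.mem_ball, Real.dist_eq]
    rw [abs_of_nonpos (by linarith)]
    linarith
  have hmem : c + (-(ε/2)) • v ∈ lhCone n s := interior_subset (hball ht)
  have hineq := hmem.2 p q hq
  have hvp : v p = 0 := Pi.single_eq_of_ne (Ne.symm hne) 1
  have hvq : v q = 1 := Pi.single_eq_same q 1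
  simp only [Pi.add_apply, Pi.smul_apply, hvp, hvq, smul_eq_mul, mul_zero,
    mul_one, add_zero] at hineq
  have hsq : (0:ℝ) < ((s ((q:ℕ)+1) : ℤ) : ℝ) := by
    exact_mod_cast hpos _ (by omega)
  calc c p / (s ((p:ℕ)+1) : ℝ) ≤ (c q + (-(ε/2))) / (s ((q:ℕ)+1) : ℝ) := hineq
  _ = c q / (s ((q:ℕ)+1) : ℝ) + (-(ε/2)) / (s ((q:ℕ)+1) : ℝ) := add_div _ _ _
  _ < c q / (s ((q:ℕ)+1) : ℝ) := by
      have : (-(ε/2)) / (s ((q:ℕ)+1) : ℝ) < 0 :=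
        div_neg_of_neg_of_pos (by linarith) hsq
      linarith

set_option maxHeartbeats 1000000 in
lemma facet_eq (n : ℕ) (s : ℕ → ℤ) (hpos : ∀ j, 1 ≤ j → 0 < s j)
    (m : Fin n → ℤ) (hG : IsGorensteinPoint (lhCone n s) (fun j => (m j : ℝ)))
    (i : ℕ) (hi : i + 1 < n) :
    s (i+1) * m ⟨i+1, hi⟩ - s (i+2) * m ⟨i, by omega⟩
      = (Int.gcd (s (i+1)) (s (i+2)) : ℤ) := by
  have hin : i < n := by omega
  set I : Fin n := ⟨i, hin⟩ with hI
  set J : Fin n := ⟨i+1, hi⟩ with hJ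
  have hIv : (I:ℕ) = i := rfl
  have hJv : (J:ℕ) = i+1 := rfl
  have hs1 : 0 < s (i+1) := hpos _ (by omega)
  have hs2 : 0 < s (i+2) := hpos _ (by omega)
  have hs1r : (0:ℝ) < ((s (i+1) : ℤ) : ℝ) := by exact_mod_cast hs1
  have hs2r : (0:ℝ) < ((s (i+2) : ℤ) : ℝ) := by exact_mod_cast hs2
  -- strict inequality at c
  have hstrict := interior_strict n s hpos _ hG.1 I J rfl
  rw [hIv, hJv] at hstrict
  have hs2eq : (i + 1) + 1 = i + 2 := rfl
  rw [hs2eq] at hstrict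
  have hApos : 0 < s (i+1) * m J - s (i+2) * m I := by
    rw [div_lt_div_iff₀ hs1r hs2r] at hstrict
    have : (m I : ℝ) * (s (i+2) : ℤ) < (m J : ℝ) * (s (i+1) : ℤ) := hstrict
    have h2 : m I * s (i+2) < m J * s (i+1) := by exact_mod_cast this
    linarith
  have hGdvd : (Int.gcd (s (i+1)) (s (i+2)) : ℤ) ∣ s (i+1) * m J - s (i+2) * m I :=
    dvd_sub ((Int.gcd_dvd_left _ _).mul_right _) ((Int.gcd_dvd_right _ _).mul_right _)
  have hGleA : (Int.gcd (s (i+1)) (s (i+2)) : ℤ) ≤ s (i+1) * m J - s (i+2) * m I :=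
    Int.le_of_dvd hApos hGdvd
  -- now the construction for the other inequality
  set g : ℤ := (Int.gcd (s (i+1)) (s (i+2)) : ℤ) with hgdef
  have hg0 : 0 < g := by
    rw [hgdef]
    exact Int.natCast_pos.mpr (Int.gcd_pos_of_ne_zero_left _ hs1.ne')
  obtain ⟨a, bz, hbez⟩ : ∃ a bz : ℤ, g = s (i+1) * a + s (i+2) * bz :=
    ⟨_, _, Int.gcd_eq_gcd_ab _ _⟩
  set t : ℤ := |bz| + (i+1) * s (i+1) + 1 with htdef
  have ht0 : 0 ≤ t := by
    have h1 : 0 ≤ |bz| := abs_nonneg _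
    have h2 : 0 ≤ ((i:ℤ)+1) * s (i+1) := mul_nonneg (by positivity) hs1.le
    rw [htdef]; push_cast; linarith
  set u : ℤ := t * s (i+1) - bz with hudef
  set v : ℤ := a + t * s (i+2) with hvdef
  have hkey : s (i+1) * v - s (i+2) * u = g := by
    rw [hudef, hvdef]; linear_combination -hbez
  have hu : ((i:ℤ)+1) * s (i+1) + 1 ≤ u := by
    have h1 : t * 1 ≤ t * s (i+1) := mul_le_mul_of_nonneg_left hs1 ht0
    have h2 : bz ≤ |bz| := le_abs_self bz
    rw [hudef, htdef]; push_cast; push_cast at h1; nlinarith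
  have hu0 : 0 < u := by
    have : 0 ≤ ((i:ℤ)+1) * s (i+1) := mul_nonneg (by positivity) hs1.le
    linarith
  have hv0 : 0 < v := by
    by_contra h
    push_neg at h
    have h1 : s (i+1) * v ≤ 0 := mul_nonpos_of_nonneg_of_nonpos hs1.le h
    have h2 : 0 < s (i+2) * u := mul_pos hs2 hu0
    linarith
  clear_value t u v
  clear htdef hudef hvdef hbez ht0
  set y : Fin n → ℤ := fun j =>
    if (j:ℕ) < i then ((j:ℕ)+1 : ℤ) * s ((j:ℕ)+1)
    else if (j:ℕ) = i then u
    else if (j:ℕ) = i+1 then v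
    else (v + ((j:ℕ) - i - 1 : ℕ)) * s ((j:ℕ)+1) with hy
  have hyI : y I = u := by
    rw [hy]; simp [hIv]
  have hyJ : y J = v := by
    rw [hy]; simp [hJv]
  have hypos : ∀ p : Fin n, 0 < y p := by
    intro p
    simp only [hy]
    by_cases h1 : (p:ℕ) < i
    · rw [if_pos h1]
      exact mul_pos (by positivity) (hpos _ (by omega))
    · rw [if_neg h1]
      by_cases h2 : (p:ℕ) = i
      · rw [if_pos h2]; exact hu0
      · rw [if_neg h2]
        by_cases h3 : (p:ℕ) = i+1
        · rw [if_pos h3]; exact hv0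
        · rw [if_neg h3]
          have : (0:ℤ) ≤ (((p:ℕ) - i - 1 : ℕ) : ℤ) := Int.natCast_nonneg _
          exact mul_pos (by linarith) (hpos _ (by omega))
  -- membership of the constructed point in the open cone
  have hyS : (fun j => ((y j : ℤ) : ℝ)) ∈ Sopen n s := by
    constructor
    · intro p
      refine div_pos ?_ ?_
      · show (0:ℝ) < ((y p : ℤ) : ℝ)
        exact_mod_cast hypos p
      · exact_mod_cast hpos ((p:ℕ)+1) (by omega)
    · intro p q hpq
      have hsp : (0:ℝ) < ((s ((p:ℕ)+1) : ℤ) : ℝ) := by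
        exact_mod_cast hpos _ (by omega)
      have hsq : (0:ℝ) < ((s ((q:ℕ)+1) : ℤ) : ℝ) := by
        exact_mod_cast hpos _ (by omega)
      rw [div_lt_div_iff₀ hsp hsq]
      have hint : y p * s ((q:ℕ)+1) < y q * s ((p:ℕ)+1) := by
        simp only [hy, hpq]
        by_cases hc1 : (p:ℕ)+1 < i
        · rw [if_pos (by omega : (p:ℕ) < i), if_pos hc1]
          have ha := hpos ((p:ℕ)+1) (by omega)
          have hb := hpos ((p:ℕ)+1+1) (by omega)
          have hP : (0:ℤ) ≤ ((p:ℕ) : ℤ) := Int.natCast_nonneg _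
          push_cast
          nlinarith [mul_pos ha hb]
        · by_cases hc2 : (p:ℕ)+1 = i
          · rw [if_pos (by omega : (p:ℕ) < i), if_neg (by omega : ¬ (p:ℕ)+1 < i),
              if_pos hc2]
            have ha := hpos ((p:ℕ)+1) (by omega)
            have hb := hpos (i+1) (by omega)
            have h1 : (((p:ℕ):ℤ)+1) * s (i+1) < u := by
              have : ((i:ℤ)+1) = ((p:ℕ):ℤ)+2 := by
                have : ((p:ℕ):ℤ)+1 = (i:ℤ) := by exact_mod_cast congrArg (Nat.cast : ℕ → ℤ) hc2
                linarith
              rw [this] at hu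
              nlinarith
            have h2 : (p:ℕ)+1+1 = i+1 := by omega
            rw [h2]
            push_cast
            nlinarith [mul_lt_mul_of_pos_right h1 ha]
          · by_cases hc3 : (p:ℕ) = i
            · rw [if_neg (by omega : ¬ (p:ℕ) < i), if_pos hc3,
                if_neg (by omega : ¬ (p:ℕ)+1 < i), if_neg (by omega : ¬ (p:ℕ)+1 = i),
                if_pos (by omega : (p:ℕ)+1 = i+1)]
              have h2 : (p:ℕ)+1+1 = i+2 := by omega
              have h3 : (p:ℕ)+1 = i+1 := by omega
              rw [h2, h3]
              linarith [hkey, hg0]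
            · by_cases hc4 : (p:ℕ) = i+1
              · rw [if_neg (by omega : ¬ (p:ℕ) < i), if_neg (by omega : ¬ (p:ℕ) = i),
                  if_pos hc4, if_neg (by omega : ¬ (p:ℕ)+1 < i),
                  if_neg (by omega : ¬ (p:ℕ)+1 = i), if_neg (by omega : ¬ (p:ℕ)+1 = i+1)]
                have hk1 : (p:ℕ)+1-i-1 = 1 := by omega
                rw [hk1]
                have ha := hpos ((p:ℕ)+1) (by omega)
                have hb := hpos ((p:ℕ)+1+1) (by omega)
                have h1 : v * 1 < (v+1) * s ((p:ℕ)+1) := by nlinarith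
                push_cast
                nlinarith [mul_lt_mul_of_pos_right h1 hb]
              · -- (p:ℕ) ≥ i+2
                have hge : i+2 ≤ (p:ℕ) := by omega
                rw [if_neg (by omega : ¬ (p:ℕ) < i), if_neg (by omega : ¬ (p:ℕ) = i),
                  if_neg (by omega : ¬ (p:ℕ) = i+1), if_neg (by omega : ¬ (p:ℕ)+1 < i),
                  if_neg (by omega : ¬ (p:ℕ)+1 = i), if_neg (by omega : ¬ (p:ℕ)+1 = i+1)]
                obtain ⟨k, hk⟩ : ∃ k : ℕ, (p:ℕ) - i - 1 = k + 1 :=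
                  ⟨(p:ℕ) - i - 2, by omega⟩
                have hk2 : (p:ℕ)+1-i-1 = k+2 := by omega
                rw [hk, hk2]
                have ha := hpos ((p:ℕ)+1) (by omega)
                have hb := hpos ((p:ℕ)+1+1) (by omega)
                have hK : (0:ℤ) ≤ (k:ℤ) := Int.natCast_nonneg _
                push_cast
                nlinarith [mul_pos ha hb]
      show ((y p : ℤ):ℝ) * ((s ((q:ℕ)+1) : ℤ):ℝ) < ((y q : ℤ):ℝ) * ((s ((p:ℕ)+1) : ℤ):ℝ)
      exact_mod_cast hint
  -- use the Gorenstein property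
  have hyint : (fun j => ((y j : ℤ) : ℝ)) ∈ interior (lhCone n s) ∩ intLattice n :=
    ⟨Sopen_sub_interior n s hyS, ⟨y, rfl⟩⟩
  rw [hG.2.2] at hyint
  obtain ⟨x, ⟨hxC, hxL⟩, hxe⟩ := hyint
  obtain ⟨w, rfl⟩ := hxL
  have heI : m I + w I = y I := by
    have h := congrFun hxe I
    simp only [Pi.add_apply] at h
    exact_mod_cast h
  have heJ : m J + w J = y J := by
    have h := congrFun hxe J
    simp only [Pi.add_apply] at h
    exact_mod_cast h
  have hwle : 0 ≤ s (i+1) * w J - s (i+2) * w I := by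
    have h := hxC.2 I J rfl
    rw [hIv, hJv, hs2eq] at h
    rw [div_le_div_iff₀ hs1r hs2r] at h
    have h1 : ((w I:ℤ):ℝ) * ((s (i+2):ℤ):ℝ) ≤ ((w J:ℤ):ℝ) * ((s (i+1):ℤ):ℝ) := h
    have h2 : w I * s (i+2) ≤ w J * s (i+1) := by exact_mod_cast h1
    linarith
  have hA : s (i+1) * m J - s (i+2) * m I
      = g - (s (i+1) * w J - s (i+2) * w I) := by
    have h1 : m J = v - w J := by rw [← hyJ]; linarith [heJ]
    have h2 : m I = u - w I := by rw [← hyI]; linarith [heI]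
    rw [h1, h2]
    linear_combination hkey
  have hfin : s (i+1) * m J - s (i+2) * m I = g := by linarith
  exact hfin

set_option maxHeartbeats 1000000 in
/-- With `ℓ > 0`, `b ≠ 0`, `ℓ² + 4b ≥ 0`, `s` as usual, and
`gcd(ℓ, b) = gcd(ℓ², b)`: if `b > 0` then `C_n^{(s)}` is not Gorenstein for any
`n ≥ 5`, and if `b < -1` then `C_n^{(s)}` is not Gorenstein for any `n ≥ 6`. -/
theorem stmt16 (ℓ b : ℤ) (hℓ : 0 < ℓ) (hb : b ≠ 0) (hD : 0 ≤ ℓ ^ 2 + 4 * b)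
    (s : ℕ → ℤ) (hs0 : s 0 = 0) (hs1 : s 1 = 1)
    (hrec : ∀ j, 2 ≤ j → s j = ℓ * s (j - 1) + b * s (j - 2))
    (hgcd : Int.gcd ℓ b = Int.gcd (ℓ ^ 2) b) :
    (0 < b → ∀ n, 5 ≤ n → ¬ IsGorensteinCone (lhCone n s)) ∧
    (b < -1 → ∀ n, 6 ≤ n → ¬ IsGorensteinCone (lhCone n s)) := by
  have hpos := s_pos ℓ b hℓ hD s hs0 hs1 hrec
  obtain ⟨h2f, h3f, h4f, h5f, h6f⟩ := s_formulas ℓ b s hs0 hs1 hrec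
  constructor
  · intro hbpos n hn hcone
    obtain ⟨c, hc⟩ := hcone
    obtain ⟨m, hm⟩ := hc.2.1
    rw [← hm] at hc
    have e2 : s 3 * m ⟨3, by omega⟩ - s 4 * m ⟨2, by omega⟩
        = (Int.gcd (s 3) (s 4) : ℤ) := facet_eq n s hpos m hc 2 (by omega)
    have e3 : s 4 * m ⟨4, by omega⟩ - s 5 * m ⟨3, by omega⟩
        = (Int.gcd (s 4) (s 5) : ℤ) := facet_eq n s hpos m hc 3 (by omega)
    exact nt_bpos ℓ b hℓ hbpos hgcd _ _ _ h3f h4f h5f _ _ _ e2 e3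
  · intro hbneg n hn hcone
    obtain ⟨c, hc⟩ := hcone
    obtain ⟨m, hm⟩ := hc.2.1
    rw [← hm] at hc
    have e2 : s 3 * m ⟨3, by omega⟩ - s 4 * m ⟨2, by omega⟩
        = (Int.gcd (s 3) (s 4) : ℤ) := facet_eq n s hpos m hc 2 (by omega)
    have e3 : s 4 * m ⟨4, by omega⟩ - s 5 * m ⟨3, by omega⟩
        = (Int.gcd (s 4) (s 5) : ℤ) := facet_eq n s hpos m hc 3 (by omega)
    have e4 : s 5 * m ⟨5, by omega⟩ - s 6 * m ⟨4, by omega⟩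
        = (Int.gcd (s 5) (s 6) : ℤ) := facet_eq n s hpos m hc 4 (by omega)
    exact nt_bneg ℓ b hℓ hbneg hD hgcd _ _ _ _ h3f h4f h5f h6f _ _ _ _ e2 e3 e4
end
end

section
/- Let s = (s_1, ..., s_n) be a sequence of positive integers such that \gcd(s_i, s_{i+1}) = 1 for 1 \le i < n. Then the h*-vector of the rational lecture hall polytope R_n^{(s)} is symmetric if and only if s is u-generated by some sequence of positive integers. -/
noncomputable section

open scoped Classical

/-- The Ehrhart series `E_n^{(s)}(x) = ∑_{t ≥ 0} i(R_n^{(s)}, t) xᵗ` of the rational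
lecture hall polytope, where `i(R_n^{(s)}, t) = #{λ ∈ L_n^{(s)} : λₙ ≤ t}`. -/
def ehrhartSeries (n : ℕ) (s : ℕ → ℤ) : PowerSeries ℚ :=
  PowerSeries.mk fun t =>
    (Set.ncard {lam : Fin n → ℤ | lam ∈ lhPartitions n s ∧
        ∀ h : 0 < n, lam ⟨n - 1, Nat.sub_lt h Nat.one_pos⟩ ≤ (t : ℤ)} : ℚ)

/-- The `h^*`-vector of `R_n^{(s)}` is symmetric: the numerator polynomial
`Q_n^{(s)}` in `E_n^{(s)}(x) = Q_n^{(s)}(x)/(1 - x^{sₙ})^{n+1}` is palindromic. -/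
def HStarSymmetric (n : ℕ) (s : ℕ → ℤ) : Prop :=
  ∃ Q : Polynomial ℚ,
    (↑Q : PowerSeries ℚ) =
      ehrhartSeries n s * (1 - PowerSeries.X ^ (s n).toNat) ^ (n + 1) ∧
    Q.reverse = Q

/-- The sequence `(s₁,…,sₙ)` is `u`-generated by `(u₁,…,u_{n-1})`:
`s₂ = u₁s₁ - 1` and `s_{i+1} = uᵢsᵢ - s_{i-1}` for `i > 1`. -/
def UGenerated (n : ℕ) (s u : ℕ → ℤ) : Prop :=
  (2 ≤ n → s 2 = u 1 * s 1 - 1) ∧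
  ∀ i, 1 < i → i + 1 ≤ n → s (i + 1) = u i * s i - s (i - 1)


namespace S18
open Finset Polynomial

variable {n : ℕ} {s : ℕ → ℤ}

/-- `s` with the convention `s₀ = 1`. -/
def sp (s : ℕ → ℤ) : ℕ → ℤ := fun j => if j = 0 then 1 else s j

/-- coordinate `λ_j` (math-indexed, `λ_0 = 0`, out of range `0`). -/
def coord (n : ℕ) (lam : Fin n → ℤ) (j : ℕ) : ℤ :=
  if h : 1 ≤ j ∧ j ≤ n then lam ⟨j - 1, by omega⟩ else 0

/-- the linear functional `g_j(λ) = s_{j-1} λ_j - s_j λ_{j-1}`. -/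
def gf (n : ℕ) (s : ℕ → ℤ) (lam : Fin n → ℤ) (j : ℕ) : ℤ :=
  sp s (j - 1) * coord n lam j - sp s j * coord n lam (j - 1)

def ee (s : ℕ → ℤ) (j : ℕ) : ℤ := sp s (j - 1) * sp s j

lemma coord_fin (n : ℕ) (lam : Fin n → ℤ) (i : Fin n) :
    coord n lam ((i : ℕ) + 1) = lam i := by
  have h : 1 ≤ (i : ℕ) + 1 ∧ (i : ℕ) + 1 ≤ n := ⟨by omega, by omega⟩
  have h2 : (⟨(i : ℕ) + 1 - 1, by omega⟩ : Fin n) = i := Fin.ext (by simp)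
  simp only [coord, dif_pos h, h2]

lemma coord_zero (n : ℕ) (lam : Fin n → ℤ) : coord n lam 0 = 0 := by
  simp [coord]

lemma gf_one (n : ℕ) (s : ℕ → ℤ) (lam : Fin n → ℤ) :
    gf n s lam 1 = coord n lam 1 := by
  have h0 : (1:ℕ) - 1 = 0 := rfl
  simp [gf, h0, coord_zero, sp]

lemma sp_pos {n : ℕ} {s : ℕ → ℤ} (hs : ∀ i, 1 ≤ i → i ≤ n → 0 < s i) {j : ℕ}
    (hj : j ≤ n) : 0 < sp s j := by
  rcases Nat.eq_zero_or_pos j with h | h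
  · simp [sp, h]
  · simpa [sp, Nat.pos_iff_ne_zero.mp h] using hs j h hj

lemma mem_cone_aux {n : ℕ} {s : ℕ → ℤ} (hn : 1 ≤ n)
    (hs : ∀ i, 1 ≤ i → i ≤ n → 0 < s i) (lam : Fin n → ℤ) :
    (fun i => ((lam i : ℝ))) ∈
      {x : Fin n → ℝ | (∀ i : Fin n, (i : ℕ) = 0 → 0 ≤ x i / (s 1 : ℝ)) ∧
       (∀ i j : Fin n, (j : ℕ) = (i : ℕ) + 1 →
          x i / (s ((i : ℕ) + 1) : ℝ) ≤ x j / (s ((j : ℕ) + 1) : ℝ))}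
      ↔ ∀ j, 1 ≤ j → j ≤ n → 0 ≤ gf n s lam j := by
  constructor
  · rintro ⟨h0, hchain⟩ j hj1 hjn
    rcases Nat.eq_or_lt_of_le hj1 with h1 | h2
    · -- j = 1
      subst h1
      have hi : (0 : ℕ) < n := by omega
      have h := h0 ⟨0, hi⟩ rfl
      have hs1 : (0:ℝ) < (s 1 : ℝ) := by exact_mod_cast hs 1 le_rfl hn
      have h0' : (0:ℝ) ≤ ((lam ⟨0, hi⟩ : ℤ) : ℝ) := by
        have h2 := (le_div_iff₀ hs1).mp h
        simpa using h2
      have hl : (0:ℤ) ≤ lam ⟨0, hi⟩ := by exact_mod_cast h0'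
      have hc : coord n lam 1 = lam ⟨0, hi⟩ := by
        have := coord_fin n lam ⟨0, hi⟩
        simpa using this
      rw [gf_one, hc]
      exact hl
    · -- j ≥ 2
      have hi2 : j - 2 < n := by omega
      have hi1 : j - 1 < n := by omega
      have hji : ((⟨j-1, hi1⟩ : Fin n) : ℕ) = ((⟨j-2, hi2⟩ : Fin n) : ℕ) + 1 := by
        simp; omega
      have h := hchain ⟨j-2, hi2⟩ ⟨j-1, hi1⟩ hji
      simp only at h
      have e2 : (j - 2 : ℕ) + 1 = j - 1 := by omega
      have e1 : (j - 1 : ℕ) + 1 = j := by omega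
      rw [e2, e1] at h
      have hsj1 : (0:ℝ) < ((s (j-1) : ℤ) : ℝ) := by exact_mod_cast hs (j-1) (by omega) (by omega)
      have hsj : (0:ℝ) < ((s j : ℤ) : ℝ) := by exact_mod_cast hs j (by omega) (by omega)
      have h' := (div_le_div_iff₀ hsj1 hsj).mp h
      have hcj : coord n lam j = lam ⟨j - 1, hi1⟩ := by
        have := coord_fin n lam ⟨j-1, hi1⟩
        rw [e1] at this; exact this
      have hcj1 : coord n lam (j-1) = lam ⟨j - 2, hi2⟩ := by
        have := coord_fin n lam ⟨j-2, hi2⟩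
        rw [e2] at this
        simpa using this
      have hint : lam ⟨j-2, hi2⟩ * s j ≤ lam ⟨j-1, hi1⟩ * s (j-1) := by exact_mod_cast h'
      have hspj1 : sp s (j-1) = s (j-1) := by simp [sp]; omega
      have hspj : sp s j = s j := by simp [sp]; omega
      simp only [gf, hcj, hcj1, hspj1, hspj]
      linarith
  · intro hg
    constructor
    · intro i hi
      have h1 := hg 1 le_rfl hn
      rw [gf_one] at h1
      have hc : coord n lam 1 = lam i := by
        have := coord_fin n lam i
        rw [hi] at this
        simpa using this
      rw [hc] at h1
      have hs1 : (0:ℝ) < (s 1 : ℝ) := by exact_mod_cast hs 1 le_rfl hn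
      show (0:ℝ) ≤ ((lam i : ℤ) : ℝ) / (s 1 : ℝ)
      apply div_nonneg _ (le_of_lt hs1)
      exact_mod_cast h1
    · intro i j hij
      have hj1 : 1 ≤ (j:ℕ) := by omega
      have h := hg ((j:ℕ)+1) (by omega) (by omega)
      have hcj : coord n lam ((j:ℕ)+1) = lam j := coord_fin n lam j
      have hci : coord n lam ((j:ℕ)) = lam i := by
        have := coord_fin n lam i
        rw [← hij] at this
        simpa using this
      have esub : ((j:ℕ)+1) - 1 = (j:ℕ) := rfl
      have hspj1 : sp s ((j:ℕ)) = s ((i:ℕ)+1) := by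
        simp [sp, hij]
      have hspj : sp s ((j:ℕ)+1) = s ((j:ℕ)+1) := by simp [sp]
      simp only [gf, esub, hcj, hci, hspj1, hspj] at h
      have hsi : (0:ℝ) < ((s ((i:ℕ)+1) : ℤ) : ℝ) := by
        exact_mod_cast hs ((i:ℕ)+1) (by omega) (by omega)
      have hsj : (0:ℝ) < ((s ((j:ℕ)+1) : ℤ) : ℝ) := by
        exact_mod_cast hs ((j:ℕ)+1) (by omega) (by omega)
      show ((lam i : ℤ) : ℝ) / (s ((i:ℕ)+1) : ℝ) ≤ ((lam j : ℤ) : ℝ) / (s ((j:ℕ)+1) : ℝ)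
      rw [div_le_div_iff₀ hsi hsj]
      have : lam i * s ((j:ℕ)+1) ≤ lam j * s ((i:ℕ)+1) := by linarith
      exact_mod_cast this


lemma ee_pos (hs : ∀ i, 1 ≤ i → i ≤ n → 0 < s i) {j : ℕ} (hj1 : 1 ≤ j) (hj : j ≤ n) :
    0 < ee s j :=
  mul_pos (sp_pos hs (by omega)) (sp_pos hs hj)

lemma gf_succ (lam : Fin n → ℤ) (j : ℕ) :
    gf n s lam (j+1) = sp s j * coord n lam (j+1) - sp s (j+1) * coord n lam j := rfl

lemma chain_nonneg (hs : ∀ i, 1 ≤ i → i ≤ n → 0 < s i) {lam : Fin n → ℤ}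
    (hg : ∀ i, 1 ≤ i → i ≤ n → 0 ≤ gf n s lam i) :
    ∀ j, j ≤ n → 0 ≤ coord n lam j := by
  intro j
  induction j with
  | zero => intro _; simp [coord_zero]
  | succ j ih =>
    intro hj
    have h1 := hg (j+1) (by omega) hj
    have h2 := ih (by omega)
    have h3 : 0 < sp s j := sp_pos hs (by omega)
    have h4 : 0 < sp s (j+1) := sp_pos hs hj
    rw [gf_succ] at h1
    nlinarith

lemma chain_cross (hs : ∀ i, 1 ≤ i → i ≤ n → 0 < s i) {lam : Fin n → ℤ}
    (hg : ∀ i, 1 ≤ i → i ≤ n → 0 ≤ gf n s lam i) :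
    ∀ j, j ≤ n → ∀ i, i ≤ j → sp s j * coord n lam i ≤ sp s i * coord n lam j := by
  intro j
  induction j with
  | zero => intro _ i hi; interval_cases i; exact le_rfl
  | succ j ih =>
    intro hj i hi
    rcases Nat.eq_or_lt_of_le hi with h | h
    · subst h; exact le_rfl
    · have hij : i ≤ j := by omega
      have IH := ih (by omega) i hij
      have h1 := hg (j+1) (by omega) hj
      rw [gf_succ] at h1
      have h3 : 0 < sp s j := sp_pos hs (by omega)
      have h4 : 0 < sp s (j+1) := sp_pos hs hj
      have h5 : 0 < sp s i := sp_pos hs (by omega)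
      have h6 : 0 ≤ coord n lam i := chain_nonneg hs hg i (by omega)
      have h7 : 0 ≤ coord n lam j := chain_nonneg hs hg j (by omega)
      have key : sp s j * (sp s (j+1) * coord n lam i) ≤ sp s j * (sp s i * coord n lam (j+1)) := by
        nlinarith
      exact le_of_mul_le_mul_left key h3
  
lemma coord_bound (hn : 1 ≤ n) (hs : ∀ i, 1 ≤ i → i ≤ n → 0 < s i) {lam : Fin n → ℤ}
    (hg : ∀ i, 1 ≤ i → i ≤ n → 0 ≤ gf n s lam i) {m : ℤ}
    (hm : coord n lam n = m) (i : ℕ) (hi : i ≤ n) :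
    coord n lam i ≤ sp s i * m := by
  have h := chain_cross hs hg n le_rfl i hi
  rw [hm] at h
  have h2 : 0 ≤ coord n lam i := chain_nonneg hs hg i hi
  have h3 : 0 < sp s n := sp_pos hs le_rfl
  nlinarith

def box (n : ℕ) (s : ℕ → ℤ) (m : ℕ) : Finset (Fin n → ℤ) :=
  Fintype.piFinset (fun i => Finset.Icc 0 (sp s ((i:ℕ)+1) * m))

/-- the finite set of lattice points with:  all `g_i ≥ ε`;  `g_i < e_i + ε` for `i > j`;
`λ_n = m`.  For `ε = 0, j = n` this is the graded cone, for `ε = 0, j = 0` the graded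
fundamental parallelepiped; `ε = 1` gives the interior versions. -/
def Lfin (n : ℕ) (s : ℕ → ℤ) (ε j m : ℕ) : Finset (Fin n → ℤ) :=
  (box n s m).filter (fun lam =>
    (∀ i, 1 ≤ i → i ≤ n → (ε:ℤ) ≤ gf n s lam i) ∧
    (∀ i, j < i → i ≤ n → gf n s lam i < ee s i + ε) ∧
    coord n lam n = (m:ℤ))

lemma mem_Lfin (hn : 1 ≤ n) (hs : ∀ i, 1 ≤ i → i ≤ n → 0 < s i)
    {ε j m : ℕ} {lam : Fin n → ℤ} :
    lam ∈ Lfin n s ε j m ↔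
      ((∀ i, 1 ≤ i → i ≤ n → (ε:ℤ) ≤ gf n s lam i) ∧
      (∀ i, j < i → i ≤ n → gf n s lam i < ee s i + ε) ∧
      coord n lam n = (m:ℤ)) := by
  constructor
  · intro h
    simp only [Lfin, Finset.mem_filter] at h
    exact h.2
  · intro h
    simp only [Lfin, Finset.mem_filter]
    refine ⟨?_, h⟩
    rw [box, Fintype.mem_piFinset]
    intro i
    have hg : ∀ i, 1 ≤ i → i ≤ n → 0 ≤ gf n s lam i := by
      intro i h1 h2
      exact le_trans (by positivity) (h.1 i h1 h2)
    rw [Finset.mem_Icc, ← coord_fin n lam i]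
    constructor
    · exact chain_nonneg hs hg _ (by omega)
    · exact coord_bound hn hs hg h.2.2 _ (by omega)


lemma coord_pos_eq (lam : Fin n → ℤ) {t : ℕ} (h1 : 1 ≤ t) (h2 : t ≤ n) :
    coord n lam t = lam ⟨t-1, by omega⟩ := by
  rw [coord, dif_pos ⟨h1, h2⟩]

/-- the ray generator `v^{(j)} = (0,…,0,s_j,…,s_n)` (math-indexed). -/
def gen (n : ℕ) (s : ℕ → ℤ) (j : ℕ) : Fin n → ℤ :=
  fun i => if j ≤ (i:ℕ)+1 then sp s ((i:ℕ)+1) else 0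

lemma coord_gen {j t : ℕ} (ht : t ≤ n) :
    coord n (gen n s j) t = if 1 ≤ t ∧ j ≤ t then sp s t else 0 := by
  rcases Nat.eq_zero_or_pos t with h | h
  · subst h; simp [coord_zero]
  · rw [coord_pos_eq _ h ht]
    have e : (t - 1 : ℕ) + 1 = t := by omega
    simp only [gen, e]
    have h1 : 1 ≤ t := h
    simp [h1]

lemma coord_addk (lam v : Fin n → ℤ) (k : ℤ) (t : ℕ) :
    coord n (fun i => lam i + k * v i) t = coord n lam t + k * coord n v t := by
  unfold coord
  split
  · rfl
  · ring

lemma gf_addk (lam v : Fin n → ℤ) (k : ℤ) (t : ℕ) :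
    gf n s (fun i => lam i + k * v i) t = gf n s lam t + k * gf n s v t := by
  simp only [gf, coord_addk]; ring

lemma gf_gen {i j : ℕ} (hi1 : 1 ≤ i) (hin : i ≤ n) (hj1 : 1 ≤ j) :
    gf n s (gen n s j) i = if i = j then ee s i else 0 := by
  have hc1 : coord n (gen n s j) i = if 1 ≤ i ∧ j ≤ i then sp s i else 0 := coord_gen hin
  have hc2 : coord n (gen n s j) (i-1) = if 1 ≤ i-1 ∧ j ≤ i-1 then sp s (i-1) else 0 :=
    coord_gen (by omega)
  rw [gf, hc1, hc2]
  rcases lt_trichotomy i j with h | h | h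
  · have e1 : ¬ (1 ≤ i ∧ j ≤ i) := by omega
    have e2 : ¬ (1 ≤ i-1 ∧ j ≤ i-1) := by omega
    have e3 : i ≠ j := by omega
    simp [e1, e2, e3]
  · subst h
    have e1 : (1 ≤ i ∧ i ≤ i) := by omega
    have e2 : ¬ (1 ≤ i-1 ∧ i ≤ i-1) := by omega
    simp [e1, e2, ee]
  · have e1 : (1 ≤ i ∧ j ≤ i) := by omega
    have e2 : (1 ≤ i-1 ∧ j ≤ i-1) := by omega
    have e3 : i ≠ j := by omega
    simp [e1, e2, e3]
    ring

lemma coordn_gen (hn : 1 ≤ n) {j : ℕ} (hj1 : 1 ≤ j) (hjn : j ≤ n) :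
    coord n (gen n s j) n = sp s n := by
  rw [coord_gen le_rfl]
  simp [hn, hjn]

lemma dn_cast (hn : 1 ≤ n) (hs : ∀ i, 1 ≤ i → i ≤ n → 0 < s i) :
    (((s n).toNat : ℕ) : ℤ) = sp s n := by
  have h1 : 0 < s n := hs n hn le_rfl
  have h2 : sp s n = s n := by simp [sp]; omega
  rw [h2]
  omega

lemma card_peel (hn : 1 ≤ n) (hs : ∀ i, 1 ≤ i → i ≤ n → 0 < s i)
    {ε : ℕ} (hε : ε ≤ 1) {j : ℕ} (hj1 : 1 ≤ j) (hjn : j ≤ n) (m : ℕ) :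
    (Lfin n s ε j m).card
      = ∑ k ∈ range (m / (s n).toNat + 1), (Lfin n s ε (j-1) (m - (s n).toNat * k)).card := by
  set d := (s n).toNat with hd_def
  have hd : ((d : ℕ) : ℤ) = sp s n := dn_cast hn hs
  have hdpos : 0 < d := by
    have := sp_pos hs (le_refl n); omega
  have heepos : 0 < ee s j := ee_pos hs hj1 hjn
  set een := (ee s j).toNat with heen_def
  have heen : ((een : ℕ) : ℤ) = ee s j := by omega
  have heenpos : 0 < een := by omega
  set F : ℕ → Finset (Fin n → ℤ) := fun k =>
    (Lfin n s ε (j-1) (m - d*k)).image (fun lam => fun i => lam i + (k:ℤ) * gen n s j i)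
    with hF
  have hsplit : Lfin n s ε j m = (range (m / d + 1)).biUnion F := by
    ext x
    simp only [mem_biUnion, hF, mem_image, mem_range]
    constructor
    · intro hx
      obtain ⟨hxlo, hxhi, hxn⟩ := (mem_Lfin hn hs).mp hx
      have hGnn : 0 ≤ gf n s x j - ε := by linarith [hxlo j hj1 hjn]
      set G : ℕ := (gf n s x j - ε).toNat with hG_def
      have hG : ((G:ℕ):ℤ) = gf n s x j - ε := by omega
      set K := G / een with hK_def
      set lam : Fin n → ℤ := fun i => x i + (-(K:ℤ)) * gen n s j i with hlam
      have hgf_lam : ∀ t, 1 ≤ t → t ≤ n →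
          gf n s lam t = gf n s x t - (K:ℤ) * (if t = j then ee s t else 0) := by
        intro t h1 h2
        rw [hlam, gf_addk, gf_gen h1 h2 hj1]; ring
      have hmod : een * K + G % een = G := by
        rw [hK_def]; exact Nat.div_add_mod G een
      have hmodlt : G % een < een := Nat.mod_lt _ heenpos
      have hmodlt' : ((G % een : ℕ) : ℤ) < ee s j := by
        have h2 : ((G % een : ℕ):ℤ) < ((een:ℕ):ℤ) := by exact_mod_cast hmodlt
        rw [heen] at h2; exact h2
      have hgfj : gf n s lam j = (ε:ℤ) + ((G % een : ℕ) : ℤ) := by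
        rw [hgf_lam j hj1 hjn, if_pos rfl]
        have h1 : ((een * K + G % een : ℕ) : ℤ) = ((G:ℕ):ℤ) := by exact_mod_cast congrArg (fun t : ℕ => (t:ℤ)) hmod
        push_cast at h1
        rw [hG] at h1
        rw [← heen]
        push_cast
        linarith
      have hlam_lo : ∀ t, 1 ≤ t → t ≤ n → (ε:ℤ) ≤ gf n s lam t := by
        intro t h1 h2
        by_cases htj : t = j
        · rw [htj, hgfj]
          have := Int.natCast_nonneg (G % een)
          linarith
        · rw [hgf_lam t h1 h2, if_neg htj]
          simpa using hxlo t h1 h2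
      have hlam_nonneg : ∀ t, 1 ≤ t → t ≤ n → 0 ≤ gf n s lam t := by
        intro t h1 h2
        have := hlam_lo t h1 h2
        have h3 : (0:ℤ) ≤ (ε:ℤ) := Int.natCast_nonneg ε
        linarith
      have hcoordlam : coord n lam n = (m:ℤ) - (K:ℤ) * d := by
        rw [hlam, coord_addk, coordn_gen hn hj1 hjn, hxn, hd]; ring
      have hKd : (K:ℤ) * d ≤ (m:ℤ) := by
        have := chain_nonneg hs hlam_nonneg n le_rfl
        rw [hcoordlam] at this; linarith
      have hKd' : d * K ≤ m := by
        have h2 : ((d * K : ℕ) : ℤ) ≤ (m : ℤ) := by push_cast; linarith [hKd]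
        exact_mod_cast h2
      refine ⟨K, ?_, lam, ?_, ?_⟩
      · apply Nat.lt_succ_of_le
        apply (Nat.le_div_iff_mul_le hdpos).mpr
        rw [mul_comm]; exact hKd'
      · rw [mem_Lfin hn hs]
        refine ⟨hlam_lo, ?_, ?_⟩
        · intro t ht1 ht2
          by_cases htj : t = j
          · rw [htj, hgfj]
            linarith
          · rw [hgf_lam t (by omega) ht2, if_neg htj]
            simp only [mul_zero, sub_zero]
            exact hxhi t (by omega) ht2
        · rw [hcoordlam, Nat.cast_sub hKd']
          push_cast
          ring
      · funext i
        simp only [hlam]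
        ring
    · rintro ⟨k, hk, lam, hlam_mem, rfl⟩
      obtain ⟨hlo, hhi, hcn⟩ := (mem_Lfin hn hs).mp hlam_mem
      have hkd : d * k ≤ m := by
        have h2 : k * d ≤ m := (Nat.le_div_iff_mul_le hdpos).mp (Nat.lt_succ_iff.mp hk)
        rwa [Nat.mul_comm] at h2
      rw [mem_Lfin hn hs]
      have hgfx : ∀ t, 1 ≤ t → t ≤ n →
          gf n s (fun i => lam i + (k:ℤ) * gen n s j i) t
            = gf n s lam t + (k:ℤ) * (if t = j then ee s t else 0) := by
        intro t h1 h2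
        rw [gf_addk, gf_gen h1 h2 hj1]
      refine ⟨?_, ?_, ?_⟩
      · intro t h1 h2
        rw [hgfx t h1 h2]
        have h3 := hlo t h1 h2
        have : (0:ℤ) ≤ (k:ℤ) * (if t = j then ee s t else 0) := by
          by_cases htj : t = j
          · rw [if_pos htj, htj]
            have h9 := le_of_lt heepos
            positivity
          · simp [htj]
        linarith
      · intro t ht1 ht2
        have htj : t ≠ j := by omega
        rw [hgfx t (by omega) ht2, if_neg htj]
        simpa using hhi t (by omega) ht2
      · rw [coord_addk, coordn_gen hn hj1 hjn, hcn, Nat.cast_sub hkd, ← hd]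
        push_cast
        ring
  rw [hsplit]
  rw [Finset.card_biUnion]
  · apply Finset.sum_congr rfl
    intro k _
    rw [hF]
    apply Finset.card_image_of_injective
    intro a b hab
    funext i
    have := congrFun hab i
    simpa using this
  · -- disjointness
    intro k1 hk1 k2 hk2 hne
    rw [Function.onFun_apply, Finset.disjoint_left]
    intro x hx1 hx2
    apply hne
    simp only [hF, mem_image] at hx1 hx2
    obtain ⟨l1, hl1, rfl⟩ := hx1
    obtain ⟨l2, hl2, heq⟩ := hx2
    have key : ∀ (kk : ℕ) (ll : Fin n → ℤ), ll ∈ Lfin n s ε (j-1) (m - d*kk) →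
        (ε:ℤ) + kk * ee s j ≤ gf n s (fun i => ll i + (kk:ℤ) * gen n s j i) j ∧
        gf n s (fun i => ll i + (kk:ℤ) * gen n s j i) j < (ε:ℤ) + (kk+1) * ee s j := by
      intro kk ll hll
      obtain ⟨hlo, hhi, _⟩ := (mem_Lfin hn hs).mp hll
      rw [gf_addk, gf_gen hj1 hjn hj1, if_pos rfl]
      have h1 := hlo j hj1 hjn
      have h2 := hhi j (by omega) hjn
      constructor <;> linarith
    have k1b := key k1 l1 hl1
    have k2b' := key k2 l2 hl2
    rw [heq] at k2b'
    have e1 := k1b.1; have e2 := k1b.2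
    have e3 := k2b'.1; have e4 := k2b'.2
    rcases lt_trichotomy k1 k2 with h | h | h
    · exfalso
      have h5 : ((k1:ℤ)+1) ≤ (k2:ℤ) := by exact_mod_cast h
      have h6 := mul_le_mul_of_nonneg_right h5 (le_of_lt heepos)
      linarith
    · exact h
    · exfalso
      have h5 : ((k2:ℤ)+1) ≤ (k1:ℤ) := by exact_mod_cast h
      have h6 := mul_le_mul_of_nonneg_right h5 (le_of_lt heepos)
      linarith



lemma dn_pos (hn : 1 ≤ n) (hs : ∀ i, 1 ≤ i → i ≤ n → 0 < s i) : 0 < (s n).toNat := by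
  have := hs n hn le_rfl
  omega

lemma mem_lhPartitions_iff (hn : 1 ≤ n)
    (hs : ∀ i, 1 ≤ i → i ≤ n → 0 < s i) (lam : Fin n → ℤ) :
    lam ∈ lhPartitions n s ↔ ∀ j, 1 ≤ j → j ≤ n → 0 ≤ gf n s lam j :=
  mem_cone_aux hn hs lam

def SAser (n : ℕ) (s : ℕ → ℤ) (ε j : ℕ) : PowerSeries ℚ :=
  PowerSeries.mk fun m => ((Lfin n s ε j m).card : ℚ)

def gser (d : ℕ) : PowerSeries ℚ :=
  PowerSeries.mk fun m => if d ∣ m then 1 else 0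

lemma gser_conv {d : ℕ} (hd : 0 < d) (f : ℕ → ℚ) (m : ℕ) :
    (PowerSeries.coeff m) (gser d * PowerSeries.mk f)
      = ∑ k ∈ range (m / d + 1), f (m - d * k) := by
  rw [PowerSeries.coeff_mul, Finset.Nat.sum_antidiagonal_eq_sum_range_succ_mk]
  simp only [gser, PowerSeries.coeff_mk, ite_mul, one_mul, zero_mul]
  rw [Finset.sum_ite, Finset.sum_const_zero, add_zero]
  apply Finset.sum_nbij' (i := fun k => k / d) (j := fun k => d * k)
  · intro a ha
    simp only [mem_filter, mem_range] at ha
    simp only [mem_range]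
    have := Nat.div_le_div_right (c := d) (Nat.lt_succ_iff.mp ha.1)
    omega
  · intro b hb
    simp only [mem_range] at hb
    simp only [mem_filter, mem_range]
    refine ⟨?_, Dvd.intro b rfl⟩
    have h2 := (Nat.le_div_iff_mul_le hd).mp (Nat.lt_succ_iff.mp hb)
    have h3 : d * b ≤ m := by rw [Nat.mul_comm]; exact h2
    omega
  · intro a ha
    simp only [mem_filter] at ha
    exact Nat.mul_div_cancel' ha.2
  · intro b hb
    exact Nat.mul_div_cancel_left b (by omega)
  · intro a ha
    simp only [mem_filter] at ha
    rw [Nat.mul_div_cancel' ha.2]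

lemma gser_unit {d : ℕ} (hd : 0 < d) : gser d * (1 - PowerSeries.X ^ d) = (1 : PowerSeries ℚ) := by
  ext m
  rw [mul_sub, mul_one, map_sub, PowerSeries.coeff_mul_X_pow', PowerSeries.coeff_one]
  simp only [gser, PowerSeries.coeff_mk]
  rcases Nat.eq_zero_or_pos m with hm | hm
  · subst hm
    simp [(by omega : ¬ d ≤ 0)]
    omega
  · by_cases hdm : d ≤ m
    · rw [if_pos hdm]
      by_cases h : d ∣ m
      · have h2 : d ∣ m - d := Nat.dvd_sub h dvd_rfl
        rw [if_pos h, if_pos h2, if_neg (by omega)]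
        ring
      · have h2 : ¬ d ∣ m - d := by
          intro h3
          apply h
          have : m = (m - d) + d := by omega
          rw [this]
          exact Nat.dvd_add h3 dvd_rfl
        rw [if_neg h, if_neg h2, if_neg (by omega)]
        ring
    · rw [if_neg hdm]
      have h : ¬ d ∣ m := by
        intro h3
        have := Nat.le_of_dvd hm h3
        omega
      rw [if_neg h, if_neg (by omega)]
      ring

lemma SA_step (hn : 1 ≤ n) (hs : ∀ i, 1 ≤ i → i ≤ n → 0 < s i)
    {ε : ℕ} (hε : ε ≤ 1) {j : ℕ} (hj1 : 1 ≤ j) (hjn : j ≤ n) :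
    SAser n s ε j = gser ((s n).toNat) * SAser n s ε (j-1) := by
  ext m
  rw [SAser, PowerSeries.coeff_mk, SAser, gser_conv (dn_pos hn hs), card_peel hn hs hε hj1 hjn]
  push_cast
  rfl

lemma SA_par (hn : 1 ≤ n) (hs : ∀ i, 1 ≤ i → i ≤ n → 0 < s i)
    {ε : ℕ} (hε : ε ≤ 1) {j : ℕ} (hjn : j ≤ n) :
    SAser n s ε j * (1 - PowerSeries.X ^ ((s n).toNat)) ^ j = SAser n s ε 0 := by
  induction j with
  | zero => simp
  | succ j ih =>
    have h1 : SAser n s ε (j+1) = gser ((s n).toNat) * SAser n s ε j := by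
      have := SA_step hn hs hε (j := j+1) (by omega) hjn
      simpa using this
    rw [h1, pow_succ]
    have ih' := ih (by omega)
    calc gser ((s n).toNat) * SAser n s ε j *
          ((1 - PowerSeries.X ^ ((s n).toNat)) ^ j * (1 - PowerSeries.X ^ ((s n).toNat)))
        = (gser ((s n).toNat) * (1 - PowerSeries.X ^ ((s n).toNat))) *
          (SAser n s ε j * (1 - PowerSeries.X ^ ((s n).toNat)) ^ j) := by ring
      _ = SAser n s ε 0 := by rw [gser_unit (dn_pos hn hs), ih', one_mul]


/-- strict upper chain bound for the half-open parallelepiped -/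
lemma chain_upper0 (hs : ∀ i, 1 ≤ i → i ≤ n → 0 < s i) {lam : Fin n → ℤ}
    (hg : ∀ i, 1 ≤ i → i ≤ n → gf n s lam i < ee s i) :
    ∀ j, 1 ≤ j → j ≤ n → coord n lam j < (j:ℤ) * sp s j := by
  intro j
  induction j with
  | zero => omega
  | succ j ih =>
    intro _ hj
    rcases Nat.eq_zero_or_pos j with h0 | h0
    · subst h0
      have h1 := hg 1 le_rfl hj
      rw [gf_one] at h1
      have : ee s 1 = sp s 1 := by simp [ee, sp]
      rw [this] at h1
      push_cast
      linarith
    · have ihj := ih h0 (by omega)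
      have h1 := hg (j+1) (by omega) hj
      rw [gf_succ] at h1
      have h3 : 0 < sp s j := sp_pos hs (by omega)
      have h4 : 0 < sp s (j+1) := sp_pos hs hj
      have hee : ee s (j+1) = sp s j * sp s (j+1) := rfl
      have key : sp s j * coord n lam (j+1) < sp s j * (((j:ℤ)+1) * sp s (j+1)) := by
        rw [hee] at h1
        nlinarith
      have := lt_of_mul_lt_mul_left key (le_of_lt h3)
      push_cast
      linarith

/-- upper chain bound for the closed-top parallelepiped -/
lemma chain_upper1 (hs : ∀ i, 1 ≤ i → i ≤ n → 0 < s i) {lam : Fin n → ℤ}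
    (hg : ∀ i, 1 ≤ i → i ≤ n → gf n s lam i ≤ ee s i) :
    ∀ j, j ≤ n → coord n lam j ≤ (j:ℤ) * sp s j := by
  intro j
  induction j with
  | zero => simp [coord_zero]
  | succ j ih =>
    intro hj
    have ihj := ih (by omega)
    have h1 := hg (j+1) (by omega) hj
    rw [gf_succ] at h1
    have h3 : 0 < sp s j := sp_pos hs (by omega)
    have h4 : 0 < sp s (j+1) := sp_pos hs hj
    have hee : ee s (j+1) = sp s j * sp s (j+1) := rfl
    have key : sp s j * coord n lam (j+1) ≤ sp s j * (((j:ℤ)+1) * sp s (j+1)) := by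
      rw [hee] at h1
      nlinarith
    have := le_of_mul_le_mul_left key h3
    push_cast
    linarith

/-- lower chain bound for interior points -/
lemma chain_lower1 (hs : ∀ i, 1 ≤ i → i ≤ n → 0 < s i) {lam : Fin n → ℤ}
    (hg : ∀ i, 1 ≤ i → i ≤ n → 1 ≤ gf n s lam i) :
    ∀ j, 1 ≤ j → j ≤ n → 1 ≤ coord n lam j := by
  intro j
  induction j with
  | zero => omega
  | succ j ih =>
    intro _ hj
    rcases Nat.eq_zero_or_pos j with h0 | h0
    · subst h0
      have h1 := hg 1 le_rfl hj
      rw [gf_one] at h1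
      exact h1
    · have ihj := ih h0 (by omega)
      have h1 := hg (j+1) (by omega) hj
      rw [gf_succ] at h1
      have h3 : 0 < sp s j := sp_pos hs (by omega)
      have h4 : 0 < sp s (j+1) := sp_pos hs hj
      nlinarith

/-- the cumulative cone count (lattice points of `t·R`). -/
def Nfin (n : ℕ) (s : ℕ → ℤ) (t : ℕ) : Finset (Fin n → ℤ) :=
  (box n s t).filter (fun lam =>
    (∀ i, 1 ≤ i → i ≤ n → 0 ≤ gf n s lam i) ∧ coord n lam n ≤ (t:ℤ))

lemma mem_Nfin (hn : 1 ≤ n) (hs : ∀ i, 1 ≤ i → i ≤ n → 0 < s i)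
    {t : ℕ} {lam : Fin n → ℤ} :
    lam ∈ Nfin n s t ↔
      ((∀ i, 1 ≤ i → i ≤ n → 0 ≤ gf n s lam i) ∧ coord n lam n ≤ (t:ℤ)) := by
  constructor
  · intro h
    simp only [Nfin, Finset.mem_filter] at h
    exact h.2
  · intro h
    simp only [Nfin, Finset.mem_filter]
    refine ⟨?_, h⟩
    rw [box, Fintype.mem_piFinset]
    intro i
    rw [Finset.mem_Icc, ← coord_fin n lam i]
    have h0 : 0 ≤ coord n lam ((i:ℕ)+1) := chain_nonneg hs h.1 _ (by omega)
    refine ⟨h0, ?_⟩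
    have h2 := chain_cross hs h.1 n le_rfl ((i:ℕ)+1) (by omega)
    have h3 : 0 < sp s n := sp_pos hs le_rfl
    have h4 : 0 < sp s ((i:ℕ)+1) := sp_pos hs (by omega)
    nlinarith [h.2]

lemma ehrhart_eq (hn : 1 ≤ n) (hs : ∀ i, 1 ≤ i → i ≤ n → 0 < s i) :
    ehrhartSeries n s = PowerSeries.mk fun t => ((Nfin n s t).card : ℚ) := by
  ext t
  rw [ehrhartSeries, PowerSeries.coeff_mk, PowerSeries.coeff_mk]
  congr 1
  have hset : {lam : Fin n → ℤ | lam ∈ lhPartitions n s ∧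
      ∀ h : 0 < n, lam ⟨n - 1, Nat.sub_lt h Nat.one_pos⟩ ≤ (t : ℤ)} = ↑(Nfin n s t) := by
    ext lam
    simp only [Set.mem_setOf_eq, Finset.coe_sort_coe, Finset.mem_coe]
    rw [mem_Nfin hn hs, mem_lhPartitions_iff hn hs]
    constructor
    · rintro ⟨h1, h2⟩
      refine ⟨h1, ?_⟩
      have h3 := h2 (by omega)
      rw [coord_pos_eq lam hn le_rfl]
      exact h3
    · rintro ⟨h1, h2⟩
      refine ⟨h1, fun h => ?_⟩
      rw [coord_pos_eq lam hn le_rfl] at h2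
      exact h2
  rw [hset, Set.ncard_coe_finset]

lemma Nfin_zero (hn : 1 ≤ n) (hs : ∀ i, 1 ≤ i → i ≤ n → 0 < s i) :
    Nfin n s 0 = Lfin n s 0 n 0 := by
  ext lam
  rw [mem_Nfin hn hs, mem_Lfin hn hs]
  constructor
  · rintro ⟨h1, h2⟩
    refine ⟨by exact_mod_cast h1, fun i hi1 hi2 => by omega, ?_⟩
    have := chain_nonneg hs h1 n le_rfl
    push_cast
    omega
  · rintro ⟨h1, h2, h3⟩
    exact ⟨by exact_mod_cast h1, le_of_eq h3⟩

lemma Nfin_succ (hn : 1 ≤ n) (hs : ∀ i, 1 ≤ i → i ≤ n → 0 < s i) (t : ℕ) :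
    (Nfin n s (t+1)).card = (Nfin n s t).card + (Lfin n s 0 n (t+1)).card := by
  have hunion : Nfin n s (t+1) = Nfin n s t ∪ Lfin n s 0 n (t+1) := by
    ext lam
    rw [Finset.mem_union, mem_Nfin hn hs, mem_Nfin hn hs, mem_Lfin hn hs]
    constructor
    · rintro ⟨h1, h2⟩
      by_cases h : coord n lam n = ((t+1 : ℕ):ℤ)
      · right
        exact ⟨by exact_mod_cast h1, fun i hi1 hi2 => by omega, h⟩
      · left
        refine ⟨h1, ?_⟩
        push_cast at h2 h ⊢
        omega
    · rintro (⟨h1, h2⟩ | ⟨h1, h2, h3⟩)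
      · refine ⟨h1, by push_cast; push_cast at h2; omega⟩
      · exact ⟨by exact_mod_cast h1, le_of_eq h3⟩
  have hdisj : Disjoint (Nfin n s t) (Lfin n s 0 n (t+1)) := by
    rw [Finset.disjoint_left]
    intro lam h1 h2
    have g1 := (mem_Nfin hn hs).mp h1
    have g2 := (mem_Lfin hn hs).mp h2
    have := g2.2.2
    have := g1.2
    push_cast at *
    omega
  rw [hunion, Finset.card_union_of_disjoint hdisj]

lemma E_mul (hn : 1 ≤ n) (hs : ∀ i, 1 ≤ i → i ≤ n → 0 < s i) :
    ehrhartSeries n s * (1 - PowerSeries.X) = SAser n s 0 n := by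
  rw [ehrhart_eq hn hs]
  ext m
  rw [mul_sub, mul_one, map_sub]
  have hX : (PowerSeries.X : PowerSeries ℚ) = PowerSeries.X ^ 1 := (pow_one _).symm
  rw [hX, PowerSeries.coeff_mul_X_pow']
  simp only [PowerSeries.coeff_mk, SAser]
  rcases Nat.eq_zero_or_pos m with hm | hm
  · subst hm
    rw [if_neg (by omega)]
    rw [Nfin_zero hn hs]
    ring
  · rw [if_pos (by omega : 1 ≤ m)]
    obtain ⟨t, rfl⟩ : ∃ t, m = t + 1 := ⟨m - 1, by omega⟩
    have := Nfin_succ hn hs t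
    have e1 : (t + 1) - 1 = t := by omega
    rw [e1]
    push_cast [this]
    ring

/-- numerator building block: the geometric sum `1 + x + ⋯ + x^{d-1}`. -/
def sigp (d : ℕ) : Polynomial ℚ := ∑ i ∈ range d, Polynomial.X ^ i

lemma sig_mul (d : ℕ) :
    (1 - Polynomial.X) * sigp d = 1 - Polynomial.X ^ d := by
  have h := geom_sum_mul (Polynomial.X : Polynomial ℚ) d
  rw [sigp]
  linear_combination -h

lemma sig_mul_ps (d : ℕ) :
    (1 - PowerSeries.X) * ((sigp d : Polynomial ℚ) : PowerSeries ℚ)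
      = 1 - PowerSeries.X ^ d := by
  have h := congrArg (fun p : Polynomial ℚ => (p : PowerSeries ℚ)) (sig_mul d)
  simpa [Polynomial.coe_mul, Polynomial.coe_sub, Polynomial.coe_one,
    Polynomial.coe_pow, Polynomial.coe_X] using h

/-- The key factorization : `E · (1-x^d)^{n+1} = σ_d · P`. -/
lemma Q_eq (hn : 1 ≤ n) (hs : ∀ i, 1 ≤ i → i ≤ n → 0 < s i) :
    ehrhartSeries n s * (1 - PowerSeries.X ^ ((s n).toNat)) ^ (n+1)
      = ((sigp ((s n).toNat) : Polynomial ℚ) : PowerSeries ℚ) * SAser n s 0 0 := by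
  have h1 : ehrhartSeries n s * (1 - PowerSeries.X ^ ((s n).toNat)) ^ (n+1)
      = (ehrhartSeries n s * (1 - PowerSeries.X)) *
        ((sigp ((s n).toNat) : Polynomial ℚ) : PowerSeries ℚ) *
        (1 - PowerSeries.X ^ ((s n).toNat)) ^ n := by
    rw [pow_succ]
    rw [← sig_mul_ps ((s n).toNat)]
    ring
  rw [h1, E_mul hn hs]
  have h2 := SA_par hn hs (ε := 0) (by omega) (j := n) le_rfl
  calc SAser n s 0 n * ((sigp ((s n).toNat) : Polynomial ℚ) : PowerSeries ℚ) *
        (1 - PowerSeries.X ^ ((s n).toNat)) ^ n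
      = (SAser n s 0 n * (1 - PowerSeries.X ^ ((s n).toNat)) ^ n) *
        ((sigp ((s n).toNat) : Polynomial ℚ) : PowerSeries ℚ) := by ring
    _ = _ := by rw [h2]; ring

/-- the numerator polynomial `P` of the parallelepiped. -/
def Ppoly (n : ℕ) (s : ℕ → ℤ) : Polynomial ℚ :=
  ∑ m ∈ range (n * (s n).toNat),
    Polynomial.C (((Lfin n s 0 0 m).card : ℚ)) * Polynomial.X ^ m

lemma Lfin00_vanish (hn : 1 ≤ n) (hs : ∀ i, 1 ≤ i → i ≤ n → 0 < s i)
    {m : ℕ} (hm : n * (s n).toNat ≤ m) : Lfin n s 0 0 m = ∅ := by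
  apply Finset.eq_empty_of_forall_notMem
  intro lam hlam
  obtain ⟨h1, h2, h3⟩ := (mem_Lfin hn hs).mp hlam
  have h4 : ∀ i, 1 ≤ i → i ≤ n → gf n s lam i < ee s i := by
    intro i hi1 hi2
    have := h2 i (by omega) hi2
    simpa using this
  have h5 := chain_upper0 hs h4 n hn le_rfl
  rw [h3] at h5
  have h6 := dn_cast hn hs
  have : (m:ℤ) < (n:ℤ) * ((s n).toNat : ℤ) := by rw [h6]; exact h5
  have : (m:ℤ) < ((n * (s n).toNat : ℕ) : ℤ) := by push_cast; exact this
  omega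

lemma coeff_Ppoly (hn : 1 ≤ n) (hs : ∀ i, 1 ≤ i → i ≤ n → 0 < s i) (m : ℕ) :
    (Ppoly n s).coeff m = ((Lfin n s 0 0 m).card : ℚ) := by
  rw [Ppoly, Polynomial.finset_sum_coeff]
  by_cases hm : m < n * (s n).toNat
  · rw [Finset.sum_eq_single m]
    · simp
    · intro b _ hb
      rw [Polynomial.coeff_C_mul, Polynomial.coeff_X_pow, if_neg (by omega : ¬ m = b), mul_zero]
    · intro h
      exact absurd (Finset.mem_range.mpr hm) h
  · have hvan := Lfin00_vanish hn hs (m := m) (by omega)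
    rw [hvan]
    simp only [Finset.card_empty, Nat.cast_zero]
    apply Finset.sum_eq_zero
    intro b hb
    have hbm : b ≠ m := by
      simp only [mem_range] at hb
      omega
    rw [Polynomial.coeff_C_mul, Polynomial.coeff_X_pow, if_neg (by omega : ¬ m = b), mul_zero]

lemma coe_Ppoly (hn : 1 ≤ n) (hs : ∀ i, 1 ≤ i → i ≤ n → 0 < s i) :
    ((Ppoly n s : Polynomial ℚ) : PowerSeries ℚ) = SAser n s 0 0 := by
  ext m
  rw [Polynomial.coeff_coe, coeff_Ppoly hn hs, SAser, PowerSeries.coeff_mk]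


lemma sigp_coeff (d k : ℕ) : (sigp d).coeff k = if k < d then 1 else 0 := by
  rw [sigp, Polynomial.finset_sum_coeff]
  by_cases hk : k < d
  · rw [Finset.sum_eq_single k]
    · simp [hk]
    · intro b _ hb
      rw [Polynomial.coeff_X_pow, if_neg (by omega : ¬ k = b)]
    · intro h
      exact absurd (Finset.mem_range.mpr hk) h
  · rw [if_neg hk]
    apply Finset.sum_eq_zero
    intro b hb
    simp only [mem_range] at hb
    rw [Polynomial.coeff_X_pow, if_neg (by omega : ¬ k = b)]

lemma sigp_natDegree {d : ℕ} (hd : 0 < d) : (sigp d).natDegree = d - 1 := by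
  apply le_antisymm
  · rw [Polynomial.natDegree_le_iff_coeff_eq_zero]
    intro N hN
    rw [sigp_coeff, if_neg (by omega)]
  · apply Polynomial.le_natDegree_of_ne_zero
    rw [sigp_coeff, if_pos (by omega)]
    norm_num

lemma sigp_ne_zero {d : ℕ} (hd : 0 < d) : sigp d ≠ 0 := by
  intro h
  have := sigp_coeff d 0
  rw [h, if_pos hd] at this
  simp at this

lemma sigp_reverse {d : ℕ} (hd : 0 < d) : (sigp d).reverse = sigp d := by
  ext k
  rw [Polynomial.coeff_reverse, sigp_natDegree hd]
  by_cases hk : k ≤ d - 1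
  · rw [Polynomial.revAt_le hk, sigp_coeff, sigp_coeff, if_pos (by omega), if_pos (by omega)]
  · rw [Polynomial.revAt_eq_self_of_lt (by omega)]

/-- if the coefficients of `p` are symmetric about `c`, vanish above `c`, and
`p.coeff c ≠ 0`, then `p` is palindromic with `natDegree = c`. -/
lemma reverse_eq_of_sym {p : Polynomial ℚ} {c : ℕ}
    (hsym : ∀ m, m ≤ c → p.coeff m = p.coeff (c - m))
    (hvan : ∀ m, c < m → p.coeff m = 0)
    (hc : p.coeff c ≠ 0) : p.natDegree = c ∧ p.reverse = p := by
  have hdeg : p.natDegree = c := by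
    apply le_antisymm
    · rw [Polynomial.natDegree_le_iff_coeff_eq_zero]
      exact fun N hN => hvan N hN
    · exact Polynomial.le_natDegree_of_ne_zero hc
  refine ⟨hdeg, ?_⟩
  ext k
  rw [Polynomial.coeff_reverse, hdeg]
  by_cases hk : k ≤ c
  · rw [Polynomial.revAt_le hk]
    exact (hsym k hk).symm
  · rw [Polynomial.revAt_eq_self_of_lt (by omega)]

lemma sym_of_reverse_eq {p : Polynomial ℚ} (h : p.reverse = p) :
    ∀ m, m ≤ p.natDegree → p.coeff m = p.coeff (p.natDegree - m) := by
  intro m hm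
  conv_lhs => rw [← h]
  rw [Polynomial.coeff_reverse, Polynomial.revAt_le hm]

-- the zero point
lemma coord_zfun (j : ℕ) : coord n (fun _ => (0:ℤ)) j = 0 := by
  unfold coord; split <;> rfl

lemma Lfin000 (hn : 1 ≤ n) (hs : ∀ i, 1 ≤ i → i ≤ n → 0 < s i) :
    Lfin n s 0 0 0 = {fun _ => (0:ℤ)} := by
  ext lam
  rw [mem_Lfin hn hs, Finset.mem_singleton]
  constructor
  · rintro ⟨h1, h2, h3⟩
    have h1' : ∀ i, 1 ≤ i → i ≤ n → 0 ≤ gf n s lam i := by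
      intro i a b; simpa using h1 i a b
    funext i
    have hcross := chain_cross hs h1' n le_rfl ((i:ℕ)+1) (by omega)
    rw [h3] at hcross
    have h5 : 0 ≤ coord n lam ((i:ℕ)+1) := chain_nonneg hs h1' _ (by omega)
    have h6 : 0 < sp s n := sp_pos hs le_rfl
    push_cast at hcross
    have h7 : coord n lam ((i:ℕ)+1) ≤ 0 := by
      by_contra hpos
      push_neg at hpos
      have := mul_pos h6 hpos
      linarith
    have := coord_fin n lam i
    omega
  · rintro rfl
    refine ⟨?_, ?_, ?_⟩
    · intro i h1 h2
      simp [gf, coord_zfun]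
    · intro i h1 h2
      have := ee_pos hs (by omega : 1 ≤ i) h2
      simp only [gf, coord_zfun]
      push_cast
      linarith
    · simp [coord_zfun]

lemma Ppoly_coeff_zero (hn : 1 ≤ n) (hs : ∀ i, 1 ≤ i → i ≤ n → 0 < s i) :
    (Ppoly n s).coeff 0 = 1 := by
  rw [coeff_Ppoly hn hs, Lfin000 hn hs]
  simp

lemma Ppoly_ne_zero (hn : 1 ≤ n) (hs : ∀ i, 1 ≤ i → i ≤ n → 0 < s i) :
    Ppoly n s ≠ 0 := by
  intro h
  have := Ppoly_coeff_zero hn hs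
  rw [h] at this
  simp at this

-- reflection machinery
def wvec (n : ℕ) (s : ℕ → ℤ) : Fin n → ℤ := fun i => (((i:ℕ)+1 : ℕ) : ℤ) * sp s ((i:ℕ)+1)

lemma coord_wvec {t : ℕ} (ht : t ≤ n) : coord n (wvec n s) t = (t:ℤ) * sp s t := by
  rcases Nat.eq_zero_or_pos t with h | h
  · subst h; simp [coord_zero]
  · rw [coord_pos_eq _ h ht, wvec]
    have e : (t - 1 : ℕ) + 1 = t := by omega
    simp only [e]

lemma coord_sub (a b : Fin n → ℤ) (t : ℕ) :
    coord n (fun i => a i - b i) t = coord n a t - coord n b t := by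
  unfold coord; split
  · rfl
  · ring

lemma gf_sub (a b : Fin n → ℤ) (t : ℕ) :
    gf n s (fun i => a i - b i) t = gf n s a t - gf n s b t := by
  simp only [gf, coord_sub]; ring

lemma gf_wvec {i : ℕ} (hi1 : 1 ≤ i) (hin : i ≤ n) :
    gf n s (wvec n s) i = ee s i := by
  rw [gf, coord_wvec hin, coord_wvec (by omega : i - 1 ≤ n), ee]
  have e : ((i - 1 : ℕ) : ℤ) = (i:ℤ) - 1 := by omega
  rw [e]
  ring

lemma coordn_wvec (hn : 1 ≤ n) : coord n (wvec n s) n = (n:ℤ) * sp s n :=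
  coord_wvec le_rfl

/-- reflection `λ ↦ w - λ` gives `p'(m) = p(nd - m)`. -/
lemma card_reflect (hn : 1 ≤ n) (hs : ∀ i, 1 ≤ i → i ≤ n → 0 < s i)
    {m : ℕ} (hm : m ≤ n * (s n).toNat) :
    (Lfin n s 1 0 m).card = (Lfin n s 0 0 (n * (s n).toNat - m)).card := by
  have hd := dn_cast hn hs
  apply Finset.card_bij' (i := fun lam _ => fun t => wvec n s t - lam t)
    (j := fun lam _ => fun t => wvec n s t - lam t)
  · intro lam hl
    obtain ⟨h1, h2, h3⟩ := (mem_Lfin hn hs).mp hl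
    rw [mem_Lfin hn hs]
    refine ⟨?_, ?_, ?_⟩
    · intro i hi1 hi2
      rw [gf_sub, gf_wvec hi1 hi2]
      have := h2 i (by omega) hi2
      push_cast at this ⊢
      omega
    · intro i hi1 hi2
      rw [gf_sub, gf_wvec (by omega) hi2]
      have := h1 i (by omega) hi2
      push_cast at this ⊢
      omega
    · rw [coord_sub, coordn_wvec hn, h3, ← hd]
      push_cast [Nat.cast_sub hm]
      ring
  · intro lam hl
    obtain ⟨h1, h2, h3⟩ := (mem_Lfin hn hs).mp hl
    rw [mem_Lfin hn hs]
    refine ⟨?_, ?_, ?_⟩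
    · intro i hi1 hi2
      rw [gf_sub, gf_wvec hi1 hi2]
      have := h2 i (by omega) hi2
      push_cast at this ⊢
      omega
    · intro i hi1 hi2
      rw [gf_sub, gf_wvec (by omega) hi2]
      have := h1 i (by omega) hi2
      push_cast at this ⊢
      omega
    · rw [coord_sub, coordn_wvec hn, h3, ← hd]
      push_cast [Nat.cast_sub hm]
      ring
  · intro lam _
    funext t
    simp
  · intro lam _
    funext t
    simp

lemma Lfin10_vanish_hi (hn : 1 ≤ n) (hs : ∀ i, 1 ≤ i → i ≤ n → 0 < s i)
    {m : ℕ} (hm : n * (s n).toNat < m) : Lfin n s 1 0 m = ∅ := by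
  apply Finset.eq_empty_of_forall_notMem
  intro lam hl
  obtain ⟨h1, h2, h3⟩ := (mem_Lfin hn hs).mp hl
  have h4 : ∀ i, 1 ≤ i → i ≤ n → gf n s lam i ≤ ee s i := by
    intro i a b
    have := h2 i (by omega) b
    push_cast at this
    omega
  have h5 := chain_upper1 hs h4 n le_rfl
  rw [h3] at h5
  have hd := dn_cast hn hs
  have : (m:ℤ) ≤ ((n * (s n).toNat : ℕ) : ℤ) := by push_cast [← hd] at h5 ⊢; linarith
  omega

lemma Lfin10_vanish_zero (hn : 1 ≤ n) (hs : ∀ i, 1 ≤ i → i ≤ n → 0 < s i) :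
    Lfin n s 1 0 0 = ∅ := by
  apply Finset.eq_empty_of_forall_notMem
  intro lam hl
  obtain ⟨h1, h2, h3⟩ := (mem_Lfin hn hs).mp hl
  have h4 : ∀ i, 1 ≤ i → i ≤ n → 1 ≤ gf n s lam i := by
    intro i a b; simpa using h1 i a b
  have h5 := chain_lower1 hs h4 n hn le_rfl
  rw [h3] at h5
  omega


lemma sp_of_pos {j : ℕ} (hj : 1 ≤ j) : sp s j = s j := by
  simp [sp]; omega

lemma sp_zero : sp s 0 = 1 := rfl

/-- the "Gorenstein point" condition. -/
def Gor (n : ℕ) (s : ℕ → ℤ) : Prop :=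
  ∃ c : Fin n → ℤ, ∀ i, 1 ≤ i → i ≤ n → gf n s c i = 1

/-- the companion sequence of `u`. -/
def cpair (u : ℕ → ℤ) : ℕ → ℤ × ℤ := fun j =>
  Nat.rec ((0:ℤ), (1:ℤ)) (fun j p => (p.2, u (j+1) * p.2 - p.1)) j

lemma cpair_succ (u : ℕ → ℤ) (j : ℕ) :
    cpair u (j+1) = ((cpair u j).2, u (j+1) * (cpair u j).2 - (cpair u j).1) := rfl

lemma gor_iff_ugen (hn : 1 ≤ n) (hs : ∀ i, 1 ≤ i → i ≤ n → 0 < s i)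
    (hgcd : ∀ i, 1 ≤ i → i < n → Int.gcd (s i) (s (i + 1)) = 1) :
    Gor n s ↔ ∃ u : ℕ → ℤ, (∀ i, 1 ≤ i → i < n → 0 < u i) ∧ UGenerated n s u := by
  constructor
  · rintro ⟨c, hc⟩
    -- sequence of coordinates
    set cs : ℕ → ℤ := fun j => coord n c j with hcs
    have hc0 : cs 0 = 0 := coord_zero n c
    have heq : ∀ j, 1 ≤ j → j ≤ n → sp s (j-1) * cs j - sp s j * cs (j-1) = 1 := by
      intro j h1 h2
      exact hc j h1 h2
    have hcpos : ∀ j, 1 ≤ j → j ≤ n → 1 ≤ cs j := by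
      intro j h1 h2
      exact chain_lower1 hs (fun i a b => le_of_eq (hc i a b).symm) j h1 h2
    have hc1 : cs 1 = 1 := by
      have := heq 1 le_rfl hn
      rw [hc0] at this
      simpa [sp_zero] using this
    set u : ℕ → ℤ := fun i =>
      if i = 1 then cs 2 else
      if 1 < i ∧ i + 1 ≤ n then (s (i+1) + s (i-1)) / s i else 1 with hu
    have hstep : ∀ i, 1 < i → i + 1 ≤ n →
        s i ∣ (s (i+1) + s (i-1)) ∧ ((s (i+1) + s (i-1)) / s i) * s i = s (i+1) + s (i-1) := by
      intro i hi1 hi2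
      have e1 := heq i (by omega) (by omega)
      have e2 := heq (i+1) (by omega) hi2
      rw [sp_of_pos (by omega : 1 ≤ i-1), sp_of_pos (by omega : 1 ≤ i)] at e1
      have esub : i + 1 - 1 = i := by omega
      rw [esub, sp_of_pos (by omega : 1 ≤ i), sp_of_pos (by omega : 1 ≤ i+1)] at e2
      -- s i * (cs (i+1) + cs (i-1)) = cs i * (s (i+1) + s (i-1))
      have key : s i * (cs (i+1) + cs (i-1)) = cs i * (s (i+1) + s (i-1)) := by
        linear_combination e2 - e1
      have hcop : IsCoprime (s i) (cs i) :=
        ⟨cs (i+1), -(s (i+1)), by linarith [e2]⟩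
      have hdvd : s i ∣ (s (i+1) + s (i-1)) := by
        have h3 : s i ∣ cs i * (s (i+1) + s (i-1)) := ⟨cs (i+1) + cs (i-1), by linarith [key]⟩
        exact hcop.dvd_of_dvd_mul_left h3
      exact ⟨hdvd, Int.ediv_mul_cancel hdvd⟩
    refine ⟨u, ?_, ?_, ?_⟩
    · intro i hi1 hi2
      by_cases h1 : i = 1
      · subst h1
        simp only [hu, if_pos rfl]
        exact lt_of_lt_of_le zero_lt_one (hcpos 2 (by omega) (by omega))
      · have h2 : 1 < i ∧ i + 1 ≤ n := by omega
        simp only [hu, if_neg h1, if_pos h2]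
        obtain ⟨hdvd, hmul⟩ := hstep i (by omega) (by omega)
        have hpos : 0 < s (i+1) + s (i-1) := by
          have := hs (i+1) (by omega) (by omega)
          have := hs (i-1) (by omega) (by omega)
          omega
        have hsi := hs i (by omega) (by omega)
        by_contra hle
        push_neg at hle
        nlinarith [hmul]
    · -- s 2 = u 1 * s 1 - 1
      intro h2n
      simp only [hu, if_pos rfl]
      have := heq 2 (by omega) h2n
      rw [hc1, sp_of_pos (by omega : (1:ℕ) ≤ 1), sp_of_pos (by omega : 1 ≤ 2)] at this
      linarith
    · intro i hi1 hi2
      have hne : i ≠ 1 := by omega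
      have h2 : 1 < i ∧ i + 1 ≤ n := ⟨hi1, hi2⟩
      simp only [hu, if_neg hne, if_pos h2]
      obtain ⟨hdvd, hmul⟩ := hstep i hi1 hi2
      linarith [hmul]
  · rintro ⟨u, hupos, hu1, hu2⟩
    set cs : ℕ → ℤ := fun j => (cpair u j).1 with hcs
    have hc0 : cs 0 = 0 := rfl
    have hc1 : cs 1 = 1 := rfl
    have hrec : ∀ j, 1 ≤ j → cs (j+1) = u j * cs j - cs (j-1) := by
      intro j hj
      obtain ⟨j, rfl⟩ : ∃ j', j = j' + 1 := ⟨j - 1, by omega⟩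
      have e2 : (j+1) - 1 = j := rfl
      show (cpair u (j+1+1)).1 = u (j+1) * (cpair u (j+1)).1 - (cpair u (j+1-1)).1
      rw [e2]
      simp only [cpair_succ]
    have key : ∀ j, 1 ≤ j → j ≤ n → sp s (j-1) * cs j - sp s j * cs (j-1) = 1 := by
      intro j
      induction j with
      | zero => omega
      | succ j ih =>
        intro _ hj
        rcases Nat.lt_or_ge j 1 with h0 | h0
        · -- j + 1 = 1
          have : j = 0 := by omega
          subst this
          rw [hc1, hc0]
          simp [sp_zero]
        · rcases Nat.lt_or_ge j 2 with h1 | h1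
          · -- j + 1 = 2
            have : j = 1 := by omega
            subst this
            have hc2 : cs 2 = u 1 := by
              have := hrec 1 le_rfl
              rw [hc1, hc0] at this
              simpa using this
            have hs2 := hu1 hj
            have e : (2:ℕ) - 1 = 1 := rfl
            rw [e, hc2, hc1, sp_of_pos (by omega : (1:ℕ) ≤ 1), sp_of_pos (by omega : 1 ≤ 2), hs2]
            ring
          · -- j + 1 ≥ 3
            have ihj := ih (by omega) (by omega)
            have hrecj := hrec j (by omega)
            have hsrec := hu2 j (by omega) hj
            have e : j + 1 - 1 = j := by omega
            rw [e, hrecj, sp_of_pos (by omega : 1 ≤ j), sp_of_pos (by omega : 1 ≤ j+1), hsrec]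
            rw [sp_of_pos (by omega : 1 ≤ j-1), sp_of_pos (by omega : 1 ≤ j)] at ihj
            linear_combination ihj
    refine ⟨fun i => cs ((i:ℕ)+1), ?_⟩
    intro i h1 h2
    have hco : ∀ t, t ≤ n → coord n (fun i : Fin n => cs ((i:ℕ)+1)) t = cs t := by
      intro t ht
      rcases Nat.eq_zero_or_pos t with h | h
      · subst h; rw [coord_zero, hc0]
      · rw [coord_pos_eq _ h ht]
        have e : (t - 1) + 1 = t := by omega
        simp only [e]
    rw [gf, hco i h2, hco (i-1) (by omega)]
    exact key i h1 h2


lemma rev_of_gor (hn : 1 ≤ n) (hs : ∀ i, 1 ≤ i → i ≤ n → 0 < s i)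
    (h : Gor n s) : (Ppoly n s).reverse = Ppoly n s := by
  obtain ⟨c, hc⟩ := h
  have hd := dn_cast hn hs
  set N := n * (s n).toNat with hN
  have hcn_lo : 1 ≤ coord n c n :=
    chain_lower1 hs (fun i a b => le_of_eq (hc i a b).symm) n hn le_rfl
  have hcn_hi : coord n c n ≤ (n:ℤ) * sp s n := by
    apply chain_upper1 hs _ n le_rfl
    intro i a b
    rw [hc i a b]
    exact ee_pos hs a b
  set cnn := (coord n c n).toNat with hcnn_def
  have hcnn : ((cnn:ℕ):ℤ) = coord n c n := by omega
  have hcnnN : cnn ≤ N := by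
    have : ((cnn:ℕ):ℤ) ≤ ((N:ℕ):ℤ) := by
      rw [hcnn, hN]
      push_cast
      rw [hd]
      linarith
    exact_mod_cast this
  set M := N - cnn with hM
  -- the reflection λ ↦ w - c - λ
  have refl_mem : ∀ (m : ℕ), m ≤ M → ∀ lam ∈ Lfin n s 0 0 m,
      (fun t => (fun t' => wvec n s t' - c t') t - lam t) ∈ Lfin n s 0 0 (M - m) := by
    intro m hm lam hl
    obtain ⟨h1, h2, h3⟩ := (mem_Lfin hn hs).mp hl
    rw [mem_Lfin hn hs]
    refine ⟨?_, ?_, ?_⟩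
    · intro i hi1 hi2
      rw [gf_sub, gf_sub, gf_wvec hi1 hi2, hc i hi1 hi2]
      have := h2 i (by omega) hi2
      push_cast at this ⊢
      omega
    · intro i hi1 hi2
      rw [gf_sub, gf_sub, gf_wvec (by omega) hi2, hc i (by omega) hi2]
      have := h1 i (by omega) hi2
      push_cast at this ⊢
      omega
    · rw [coord_sub, coord_sub, coordn_wvec hn, h3, ← hcnn]
      have e1 : ((M - m : ℕ) : ℤ) = (M:ℤ) - m := by omega
      have e2 : ((M : ℕ) : ℤ) = ((N:ℕ):ℤ) - cnn := by omega
      rw [e1, e2, hN]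
      push_cast [← hd]
      ring
  have card_sym : ∀ (m : ℕ), m ≤ M →
      (Lfin n s 0 0 m).card = (Lfin n s 0 0 (M - m)).card := by
    intro m hm
    apply Finset.card_bij' (i := fun lam _ => fun t => wvec n s t - c t - lam t)
      (j := fun lam _ => fun t => wvec n s t - c t - lam t)
    · intro lam hl
      exact refl_mem m hm lam hl
    · intro lam hl
      have := refl_mem (M - m) (by omega) lam hl
      rw [(by omega : M - (M - m) = m)] at this
      exact this
    · intro lam _
      funext t; ring
    · intro lam _
      funext t; ring
  have vanish : ∀ (m : ℕ), M < m → (Lfin n s 0 0 m).card = 0 := by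
    intro m hm
    rw [Finset.card_eq_zero]
    apply Finset.eq_empty_of_forall_notMem
    intro lam hl
    obtain ⟨h1, h2, h3⟩ := (mem_Lfin hn hs).mp hl
    set y : Fin n → ℤ := fun t => wvec n s t - c t - lam t with hy
    have hyg : ∀ i, 1 ≤ i → i ≤ n → 0 ≤ gf n s y i := by
      intro i hi1 hi2
      have e : gf n s y i = ee s i - gf n s c i - gf n s lam i := by
        rw [hy]
        have := gf_sub (a := fun t' => wvec n s t' - c t') (b := lam) (t := i) (s := s)
        rw [this, gf_sub (a := wvec n s) (b := c), gf_wvec hi1 hi2]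
      rw [e, hc i hi1 hi2]
      have := h2 i (by omega) hi2
      push_cast at this
      omega
    have hyn := chain_nonneg hs hyg n le_rfl
    have : coord n y n = (n:ℤ) * sp s n - coord n c n - (m:ℤ) := by
      rw [hy, coord_sub, coord_sub, coordn_wvec hn, h3]
    rw [this] at hyn
    have hlt : (m:ℤ) ≤ (n:ℤ) * sp s n - coord n c n := by linarith
    have : (m:ℤ) ≤ ((M:ℕ):ℤ) := by
      have e2 : ((M : ℕ) : ℤ) = ((N:ℕ):ℤ) - cnn := by omega
      rw [e2, hN, hcnn]
      push_cast
      rw [hd]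
      linarith
    omega
  have hPM : (Ppoly n s).coeff M ≠ 0 := by
    rw [coeff_Ppoly hn hs]
    have := card_sym 0 (by omega)
    rw [(by omega : M - 0 = M)] at this
    rw [Lfin000 hn hs] at this
    simp only [Finset.card_singleton] at this
    rw [← this]
    norm_num
  have := reverse_eq_of_sym (p := Ppoly n s) (c := M)
    (fun m hm => by
      rw [coeff_Ppoly hn hs, coeff_Ppoly hn hs]
      exact_mod_cast congrArg (fun t : ℕ => (t:ℚ)) (card_sym m hm))
    (fun m hm => by
      rw [coeff_Ppoly hn hs]
      exact_mod_cast congrArg (fun t : ℕ => (t:ℚ)) (vanish m hm))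
    hPM
  exact this.2


lemma coord_add (a b : Fin n → ℤ) (t : ℕ) :
    coord n (fun i => a i + b i) t = coord n a t + coord n b t := by
  unfold coord; split
  · rfl
  · ring

lemma gf_add (a b : Fin n → ℤ) (t : ℕ) :
    gf n s (fun i => a i + b i) t = gf n s a t + gf n s b t := by
  simp only [gf, coord_add]; ring

/-- the recursive construction of an interior point with `g_{i₀} = 1`. -/
def xpair (s : ℕ → ℤ) (i0 : ℕ) (aa bb : ℤ) : ℕ → ℤ × ℤ := fun j =>
  Nat.rec ((0:ℤ),(0:ℤ)) (fun j p => (p.2,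
    if j + 1 = i0 then (if i0 = 1 then 1 else aa + sp s i0 * (|bb| + |p.1| + 1))
    else if j + 2 = i0 then -bb + sp s (j+1) * (|bb| + |p.2| + 1)
    else sp s (j+1) * (|p.2| + 1))) j

def xj (s : ℕ → ℤ) (i0 : ℕ) (aa bb : ℤ) (j : ℕ) : ℤ := (xpair s i0 aa bb j).2

lemma xj_zero : xj s i0 aa bb 0 = 0 := rfl

lemma xpair_fst (j : ℕ) : (xpair s i0 aa bb j).1 = xj s i0 aa bb (j - 1) := by
  cases j with
  | zero => rfl
  | succ t => rfl

lemma xj_succ (j : ℕ) :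
    xj s i0 aa bb (j+1) =
      if j + 1 = i0 then (if i0 = 1 then 1 else aa + sp s i0 * (|bb| + |xj s i0 aa bb (j-1)| + 1))
      else if j + 2 = i0 then -bb + sp s (j+1) * (|bb| + |xj s i0 aa bb j| + 1)
      else sp s (j+1) * (|xj s i0 aa bb j| + 1) := by
  show (xpair s i0 aa bb (j+1)).2 = _
  have h : (xpair s i0 aa bb (j+1)).2 =
      if j + 1 = i0 then (if i0 = 1 then 1 else aa + sp s i0 * (|bb| + |(xpair s i0 aa bb j).1| + 1))
      else if j + 2 = i0 then -bb + sp s (j+1) * (|bb| + |(xpair s i0 aa bb j).2| + 1)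
      else sp s (j+1) * (|(xpair s i0 aa bb j).2| + 1) := rfl
  rw [h, xpair_fst]
  rfl

lemma xj_spec (hs : ∀ i, 1 ≤ i → i ≤ n → 0 < s i) {i0 : ℕ} (hi01 : 1 ≤ i0) (hi0n : i0 ≤ n)
    {aa bb : ℤ} (hbez : sp s (i0-1) * aa + sp s i0 * bb = 1) :
    ∀ j, 1 ≤ j → j ≤ n →
      (1 ≤ sp s (j-1) * xj s i0 aa bb j - sp s j * xj s i0 aa bb (j-1)) ∧
      (j = i0 → sp s (j-1) * xj s i0 aa bb j - sp s j * xj s i0 aa bb (j-1) = 1) := by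
  intro j hj1 hjn
  obtain ⟨t, rfl⟩ : ∃ t, j = t + 1 := ⟨j - 1, by omega⟩
  have et : (t + 1) - 1 = t := by omega
  rw [et]
  have hspt : 0 < sp s t := sp_pos hs (by omega)
  have hspt1 : 0 < sp s (t+1) := sp_pos hs (by omega)
  by_cases hA : t + 1 = i0
  · -- the special index
    by_cases h1 : i0 = 1
    · -- i0 = 1, so t = 0
      have ht0 : t = 0 := by omega
      subst ht0
      rw [xj_succ, if_pos hA, if_pos h1, xj_zero]
      have e0 : sp s 0 = 1 := rfl
      rw [e0]
      constructor
      · ring_nf; omega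
      · intro _; ring
    · -- i0 ≥ 2, so t ≥ 1
      have ht1 : 1 ≤ t := by omega
      obtain ⟨r, rfl⟩ : ∃ r, t = r + 1 := ⟨t - 1, by omega⟩
      -- xj (t+1) via the i0 rule
      rw [xj_succ, if_pos hA, if_neg h1]
      -- xj t = xj (r+1) via the (i0 - 1) rule
      have hxt : xj s i0 aa bb (r+1) =
          -bb + sp s (r+1) * (|bb| + |xj s i0 aa bb r| + 1) := by
        rw [xj_succ, if_neg (by omega), if_pos (by omega)]
      have er : (r + 1) - 1 = r := by omega
      rw [er, hxt]
      have ei0 : sp s i0 = sp s (r+1+1) := by rw [← hA]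
      have ei1 : sp s (i0 - 1) = sp s (r+1) := by
        have : i0 - 1 = r + 1 := by omega
        rw [this]
      rw [ei0, ei1] at hbez
      rw [ei0]
      have heq2 : sp s (r+1) * (aa + sp s (r+1+1) * (|bb| + |xj s i0 aa bb r| + 1)) -
          sp s (r+1+1) * (-bb + sp s (r+1) * (|bb| + |xj s i0 aa bb r| + 1)) = 1 := by
        linear_combination hbez
      constructor
      · exact le_of_eq heq2.symm
      · intro _
        exact heq2
  · by_cases hB : t + 2 = i0
    · -- the pre-special index
      rw [xj_succ, if_neg hA, if_pos hB]
      have h6 : xj s i0 aa bb t ≤ |xj s i0 aa bb t| := le_abs_self _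
      have h7 : (0:ℤ) ≤ |xj s i0 aa bb t| := abs_nonneg _
      have h8 : (0:ℤ) ≤ |bb| := abs_nonneg _
      have h9 : bb ≤ |bb| := le_abs_self _
      have t6 : sp s t * bb ≤ sp s t * |bb| :=
        mul_le_mul_of_nonneg_left h9 (le_of_lt hspt)
      have t1 : 0 ≤ sp s t * |bb| * (sp s (t+1) - 1) :=
        mul_nonneg (mul_nonneg (le_of_lt hspt) h8) (by linarith)
      have t2 : 0 ≤ (sp s t - 1) * (sp s (t+1) * |xj s i0 aa bb t|) :=
        mul_nonneg (by linarith) (mul_nonneg (le_of_lt hspt1) h7)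
      have t3 : sp s (t+1) * xj s i0 aa bb t ≤ sp s (t+1) * |xj s i0 aa bb t| :=
        mul_le_mul_of_nonneg_left h6 (le_of_lt hspt1)
      have t5 : 1 ≤ sp s t * sp s (t+1) := by nlinarith
      constructor
      · nlinarith [t1, t2, t3, t5, t6]
      · intro h; omega
    · -- generic index
      rw [xj_succ, if_neg hA, if_neg hB]
      have h6 : xj s i0 aa bb t ≤ |xj s i0 aa bb t| := le_abs_self _
      have h7 : (0:ℤ) ≤ |xj s i0 aa bb t| := abs_nonneg _
      have t2 : 0 ≤ (sp s t - 1) * (sp s (t+1) * |xj s i0 aa bb t|) :=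
        mul_nonneg (by linarith) (mul_nonneg (le_of_lt hspt1) h7)
      have t3 : sp s (t+1) * xj s i0 aa bb t ≤ sp s (t+1) * |xj s i0 aa bb t| :=
        mul_le_mul_of_nonneg_left h6 (le_of_lt hspt1)
      have t5 : 1 ≤ sp s t * sp s (t+1) := by nlinarith
      constructor
      · nlinarith [t2, t3, t5]
      · intro h; omega

/-- existence of an interior lattice point with `g_{i₀} = 1`. -/
lemma exists_interior (hn : 1 ≤ n) (hs : ∀ i, 1 ≤ i → i ≤ n → 0 < s i)
    (hgcd : ∀ i, 1 ≤ i → i < n → Int.gcd (s i) (s (i + 1)) = 1)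
    {i0 : ℕ} (hi01 : 1 ≤ i0) (hi0n : i0 ≤ n) :
    ∃ x : Fin n → ℤ, (∀ i, 1 ≤ i → i ≤ n → 1 ≤ gf n s x i) ∧ gf n s x i0 = 1 := by
  -- Bezout data
  obtain ⟨aa, bb, hbez⟩ : ∃ aa bb : ℤ, sp s (i0-1) * aa + sp s i0 * bb = 1 := by
    by_cases h1 : i0 = 1
    · exact ⟨1, 0, by subst h1; simp [sp]⟩
    · have hg := hgcd (i0-1) (by omega) (by omega)
      have e : i0 - 1 + 1 = i0 := by omega
      rw [e] at hg
      have := Int.gcd_eq_gcd_ab (s (i0-1)) (s i0)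
      rw [hg] at this
      refine ⟨Int.gcdA (s (i0-1)) (s i0), Int.gcdB (s (i0-1)) (s i0), ?_⟩
      rw [sp_of_pos (by omega : 1 ≤ i0 - 1), sp_of_pos (by omega : 1 ≤ i0)]
      exact_mod_cast this.symm
  set x : Fin n → ℤ := fun i => xj s i0 aa bb ((i:ℕ)+1) with hx
  have hco : ∀ t, t ≤ n → coord n x t = xj s i0 aa bb t := by
    intro t ht
    rcases Nat.eq_zero_or_pos t with h | h
    · subst h; rw [coord_zero, xj_zero]
    · rw [coord_pos_eq _ h ht, hx]
      have e : (t - 1) + 1 = t := by omega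
      simp only [e]
  have hgf : ∀ j, 1 ≤ j → j ≤ n →
      gf n s x j = sp s (j-1) * xj s i0 aa bb j - sp s j * xj s i0 aa bb (j-1) := by
    intro j h1 h2
    rw [gf, hco j h2, hco (j-1) (by omega)]
  refine ⟨x, ?_, ?_⟩
  · intro i h1 h2
    rw [hgf i h1 h2]
    exact (xj_spec hs hi01 hi0n hbez i h1 h2).1
  · rw [hgf i0 hi01 hi0n]
    exact (xj_spec hs hi01 hi0n hbez i0 hi01 hi0n).2 rfl

/-- the forward direction: a symmetric `h*` forces a Gorenstein point. -/
lemma gor_of_rev (hn : 1 ≤ n) (hs : ∀ i, 1 ≤ i → i ≤ n → 0 < s i)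
    (hgcd : ∀ i, 1 ≤ i → i < n → Int.gcd (s i) (s (i + 1)) = 1)
    (hrev : (Ppoly n s).reverse = Ppoly n s) : Gor n s := by
  have hdpos : 0 < (s n).toNat := dn_pos hn hs
  set N := n * (s n).toNat with hN
  have hNpos : 0 < N := by positivity
  set D := (Ppoly n s).natDegree with hD
  have hvanN : ∀ m, N ≤ m → (Lfin n s 0 0 m).card = 0 := by
    intro m hm
    rw [Lfin00_vanish hn hs hm, Finset.card_empty]
  have hreflN : ∀ m, m ≤ N → (Lfin n s 1 0 m).card = (Lfin n s 0 0 (N - m)).card := by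
    intro m hm
    exact card_reflect hn hs hm
  have hvanhi : ∀ m, N < m → (Lfin n s 1 0 m).card = 0 := by
    intro m hm
    rw [Lfin10_vanish_hi hn hs hm, Finset.card_empty]
  have hDN : D < N := by
    have : D ≤ N - 1 := by
      rw [hD]
      rw [Polynomial.natDegree_le_iff_coeff_eq_zero]
      intro m hm
      rw [coeff_Ppoly hn hs, hvanN m (by omega)]
      norm_num
    omega
  set k := N - D with hk
  have hk1 : 1 ≤ k := by omega
  have hNDk : N = D + k := by omega
  clear_value N D k
  have hsymp : ∀ m, m ≤ D → (Lfin n s 0 0 m).card = (Lfin n s 0 0 (D - m)).card := by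
    intro m hm
    have := sym_of_reverse_eq hrev m (by rw [← hD]; exact hm)
    rw [← hD] at this
    rw [coeff_Ppoly hn hs, coeff_Ppoly hn hs] at this
    exact_mod_cast this
  have hvanD : ∀ m, D < m → (Lfin n s 0 0 m).card = 0 := by
    intro m hm
    have : (Ppoly n s).coeff m = 0 :=
      Polynomial.coeff_eq_zero_of_natDegree_lt (by rw [← hD]; exact hm)
    rw [coeff_Ppoly hn hs] at this
    exact_mod_cast this
  have hp0 : (Lfin n s 0 0 0).card = 1 := by
    rw [Lfin000 hn hs, Finset.card_singleton]
  have hpD : (Lfin n s 0 0 D).card = 1 := by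
    have := hsymp D le_rfl
    rw [(by omega : D - D = 0), hp0] at this
    exact this
  -- the series identity SA(1,0) = SA(0,0) * X^k
  have hseries : SAser n s 1 0 = SAser n s 0 0 * PowerSeries.X ^ k := by
    ext m
    rw [PowerSeries.coeff_mul_X_pow']
    simp only [SAser, PowerSeries.coeff_mk]
    by_cases hkm : k ≤ m
    · rw [if_pos hkm]
      by_cases hmN : m ≤ N
      · rw [hreflN m hmN]
        have h1 : N - m ≤ D := by omega
        have := hsymp (N - m) h1
        rw [(by omega : D - (N - m) = m - k)] at this
        rw [this]
      · rw [hvanhi m (by omega)]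
        rw [hvanD (m - k) (by omega)]
    · rw [if_neg hkm]
      have hmN : m ≤ N := by omega
      rw [hreflN m hmN, hvanD (N - m) (by omega)]
      norm_num
  -- cancel the factor (1 - X^(s n).toNat)^n
  have hXdne : (1 - PowerSeries.X ^ ((s n).toNat) : PowerSeries ℚ) ≠ 0 := by
    intro h
    have := congrArg (PowerSeries.coeff 0) h
    rw [map_sub, PowerSeries.coeff_one, PowerSeries.coeff_X_pow] at this
    rw [if_neg (by omega : ¬ (0:ℕ) = (s n).toNat)] at this
    simp at this
  have hcancel : SAser n s 1 n = SAser n s 0 n * PowerSeries.X ^ k := by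
    have h1 := SA_par hn hs (ε := 1) (by omega) (j := n) le_rfl
    have h0 := SA_par hn hs (ε := 0) (by omega) (j := n) le_rfl
    have key : SAser n s 1 n * (1 - PowerSeries.X ^ ((s n).toNat)) ^ n
        = (SAser n s 0 n * PowerSeries.X ^ k) * (1 - PowerSeries.X ^ ((s n).toNat)) ^ n := by
      rw [h1, hseries, ← h0]
      ring
    exact mul_right_cancel₀ (pow_ne_zero n hXdne) key
  have hcardA : ∀ m, k ≤ m → (Lfin n s 1 n m).card = (Lfin n s 0 n (m - k)).card := by
    intro m hm
    have := congrArg (PowerSeries.coeff m) hcancel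
    rw [PowerSeries.coeff_mul_X_pow', if_pos hm] at this
    simp only [SAser, PowerSeries.coeff_mk] at this
    exact_mod_cast this
  have hcard0 : ∀ m, m < k → (Lfin n s 1 n m).card = 0 := by
    intro m hm
    have := congrArg (PowerSeries.coeff m) hcancel
    rw [PowerSeries.coeff_mul_X_pow', if_neg (by omega)] at this
    simp only [SAser, PowerSeries.coeff_mk] at this
    exact_mod_cast this
  -- the Gorenstein point candidate
  have hck : (Lfin n s 1 0 k).card = 1 := by
    rw [hreflN k (by omega), (by omega : N - k = D), hpD]
  obtain ⟨c, hc⟩ := Finset.card_eq_one.mp hck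
  have hcmem : c ∈ Lfin n s 1 0 k := by rw [hc]; exact Finset.mem_singleton_self c
  obtain ⟨hclo, hchi, hccn⟩ := (mem_Lfin hn hs).mp hcmem
  refine ⟨c, ?_⟩
  intro i0 hi01 hi0n
  obtain ⟨x, hx1, hx2⟩ := exists_interior hn hs hgcd hi01 hi0n
  set Mz := (coord n x n).toNat with hMz
  have hMzpos : 1 ≤ coord n x n := chain_lower1 hs hx1 n hn le_rfl
  have hMcast : ((Mz:ℕ):ℤ) = coord n x n := by omega
  have hxmem : x ∈ Lfin n s 1 n Mz := by
    rw [mem_Lfin hn hs]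
    refine ⟨?_, ?_, hMcast.symm⟩
    · intro i h1 h2
      have := hx1 i h1 h2
      push_cast
      omega
    · intro i h1 h2
      omega
  have hMk : k ≤ Mz := by
    by_contra hcon
    push_neg at hcon
    have := hcard0 Mz hcon
    rw [Finset.card_eq_zero] at this
    rw [this] at hxmem
    exact absurd hxmem (Finset.notMem_empty x)
  -- the translation bijection
  set img := (Lfin n s 0 n (Mz - k)).image (fun z => fun t => z t + c t) with himg
  have hsub : img ⊆ Lfin n s 1 n Mz := by
    intro y hy
    rw [himg, Finset.mem_image] at hy
    obtain ⟨z, hz, rfl⟩ := hy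
    obtain ⟨hzlo, _, hzcn⟩ := (mem_Lfin hn hs).mp hz
    rw [mem_Lfin hn hs]
    refine ⟨?_, ?_, ?_⟩
    · intro i h1 h2
      rw [gf_add]
      have := hzlo i h1 h2
      have := hclo i h1 h2
      push_cast at *
      omega
    · intro i h1 h2
      omega
    · rw [coord_add, hzcn, hccn]
      push_cast
      omega
  have hcardimg : img.card = (Lfin n s 1 n Mz).card := by
    rw [himg, Finset.card_image_of_injective _ (fun a b hab => by
      funext i
      have := congrFun hab i
      simpa using this)]
    rw [hcardA Mz hMk]
  have himgeq : img = Lfin n s 1 n Mz :=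
    Finset.eq_of_subset_of_card_le hsub (le_of_eq hcardimg.symm)
  have hximg : x ∈ img := by rw [himgeq]; exact hxmem
  rw [himg, Finset.mem_image] at hximg
  obtain ⟨z, hz, hzx⟩ := hximg
  obtain ⟨hzlo, _, _⟩ := (mem_Lfin hn hs).mp hz
  have hgfx : gf n s x i0 = gf n s z i0 + gf n s c i0 := by
    rw [← hzx, gf_add]
  have h1 := hzlo i0 hi01 hi0n
  have h2 := hclo i0 hi01 hi0n
  push_cast at h1 h2
  omega



lemma hstar_iff (hn : 1 ≤ n) (hs : ∀ i, 1 ≤ i → i ≤ n → 0 < s i) :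
    HStarSymmetric n s ↔ (Ppoly n s).reverse = Ppoly n s := by
  have hdpos : 0 < (s n).toNat := dn_pos hn hs
  have hσne : sigp ((s n).toNat) ≠ 0 := sigp_ne_zero hdpos
  have hPne : Ppoly n s ≠ 0 := Ppoly_ne_zero hn hs
  have hlead : (sigp ((s n).toNat)).leadingCoeff * (Ppoly n s).leadingCoeff ≠ 0 :=
    mul_ne_zero (Polynomial.leadingCoeff_ne_zero.mpr hσne)
      (Polynomial.leadingCoeff_ne_zero.mpr hPne)
  constructor
  · rintro ⟨Q, hQ, hrevQ⟩
    have he : (Q : PowerSeries ℚ)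
        = ((sigp ((s n).toNat) * Ppoly n s : Polynomial ℚ) : PowerSeries ℚ) := by
      rw [hQ, Q_eq hn hs, Polynomial.coe_mul, coe_Ppoly hn hs]
    have hQe : Q = sigp ((s n).toNat) * Ppoly n s := Polynomial.coe_inj.mp he
    rw [hQe, Polynomial.reverse_mul hlead, sigp_reverse hdpos] at hrevQ
    exact mul_left_cancel₀ hσne hrevQ
  · intro hrev
    refine ⟨sigp ((s n).toNat) * Ppoly n s, ?_, ?_⟩
    · rw [Polynomial.coe_mul, coe_Ppoly hn hs]
      exact (Q_eq hn hs).symm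
    · rw [Polynomial.reverse_mul hlead, sigp_reverse hdpos, hrev]

end S18
end

noncomputable section
open scoped Classical

/-- Let `s = (s₁,…,sₙ)` be positive integers with
`gcd(sᵢ, s_{i+1}) = 1` for `1 ≤ i < n`. Then the `h^*`-vector of `R_n^{(s)}` is
symmetric iff `s` is `u`-generated by some sequence of positive integers. -/
theorem stmt18 (n : ℕ) (hn : 1 ≤ n) (s : ℕ → ℤ) (hs : ∀ i, 1 ≤ i → i ≤ n → 0 < s i)
    (hgcd : ∀ i, 1 ≤ i → i < n → Int.gcd (s i) (s (i + 1)) = 1) :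
    HStarSymmetric n s ↔
      ∃ u : ℕ → ℤ, (∀ i, 1 ≤ i → i < n → 0 < u i) ∧ UGenerated n s u := by
  rw [S18.hstar_iff hn hs]
  constructor
  · intro h
    exact (S18.gor_iff_ugen hn hs hgcd).mp (S18.gor_of_rev hn hs hgcd h)
  · intro h
    exact S18.rev_of_gor hn hs ((S18.gor_iff_ugen hn hs hgcd).mpr h)

end
end
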